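/- arXiv:1709.08686 — 5 statements merged into one kernel-verified Lean document; each statement's English description precedes it below -/
import Mathlib

section
/- The integral of ln(1+e^{-u})² over u from 0 to ∞ equals ζ(3)/4. -/
open MeasureTheory Real

noncomputable def zetaVal (s : ℕ) : ℝ := ∑' k : ℕ, 1 / ((k : ℝ) + 1) ^ s

noncomputable def polylog (m : ℕ) (z : ℝ) : ℝ := ∑' k : ℕ, z ^ (k + 1) / ((k : ℝ) + 1) ^ m

noncomputable def harm (p k : ℕ) : ℝ := ∑ j ∈ Finset.range k, 1 / ((j : ℝ) + 1) ^ p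

open Set

lemma exp_neg_deriv : ∀ x ∈ Ioi (0:ℝ),
    HasDerivWithinAt (fun u : ℝ => rexp (-u)) (-rexp (-x)) (Ioi 0) x := by
  intro x _
  have h : HasDerivAt (fun u : ℝ => rexp (-u)) (rexp (-x) * (-1)) x :=
    (Real.hasDerivAt_exp (-x)).comp x (hasDerivAt_neg x)
  simpa [mul_comm] using h.hasDerivWithinAt

lemma exp_neg_inj : InjOn (fun u : ℝ => rexp (-u)) (Ioi 0) := fun a _ b _ h => by
  have := Real.exp_injective h
  linarith [neg_injective this]

lemma exp_neg_image : (fun u : ℝ => rexp (-u)) '' Ioi 0 = Ioo 0 1 := by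
  ext t
  constructor
  · rintro ⟨u, hu, rfl⟩
    exact ⟨Real.exp_pos _, by
      have : (-u) < 0 := neg_neg_of_pos hu
      simpa using Real.exp_lt_one_iff.2 this⟩
  · rintro ⟨h0, h1⟩
    exact ⟨-Real.log t, by simpa using Real.log_neg h0 h1, by simp [Real.exp_log h0]⟩

lemma subst_exp (g : ℝ → ℝ) :
    ∫ x in Ioo (0:ℝ) 1, g x = ∫ u in Ioi (0:ℝ), rexp (-u) * g (rexp (-u)) := by
  rw [← exp_neg_image, integral_image_eq_integral_abs_deriv_smul measurableSet_Ioi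
    exp_neg_deriv exp_neg_inj g]
  refine setIntegral_congr_fun measurableSet_Ioi fun u _ => ?_
  simp [abs_of_pos (Real.exp_pos (-u)), smul_eq_mul]

lemma integralK (k : ℕ) :
    ∫ t in Ioo (0:ℝ) 1, t ^ k * (Real.log t) ^ 2 = 2 / ((k:ℝ) + 1) ^ 3 := by
  rw [subst_exp]
  have hr : (0:ℝ) < (k:ℝ) + 1 := by positivity
  have key := Real.integral_rpow_mul_exp_neg_mul_Ioi (a := 3) (r := (k:ℝ)+1)
    (by norm_num) hr
  have h1 : ∫ u in Ioi (0:ℝ), rexp (-u) * (rexp (-u) ^ k * (Real.log (rexp (-u))) ^ 2)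
      = ∫ t in Ioi (0:ℝ), t ^ ((3:ℝ) - 1) * rexp (-(((k:ℝ)+1) * t)) := by
    refine setIntegral_congr_fun measurableSet_Ioi fun u hu => ?_
    have hupos : (0:ℝ) < u := hu
    rw [Real.log_exp, ← Real.exp_nat_mul]
    rw [show ((3:ℝ) - 1) = ((2:ℕ):ℝ) by norm_num, Real.rpow_natCast]
    rw [neg_sq, show rexp (-u) * (rexp ((k:ℝ) * -u) * u ^ 2)
      = (rexp (-u) * rexp ((k:ℝ) * -u)) * u ^ 2 by ring, ← Real.exp_add]
    ring_nf
  rw [h1, key, show (3:ℝ) = (2:ℕ) + 1 by norm_num, Real.Gamma_nat_eq_factorial]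
  norm_num [Nat.factorial]
  field_simp

lemma integrableK (k : ℕ) :
    IntegrableOn (fun t : ℝ => t ^ k * (Real.log t) ^ 2) (Ioo (0:ℝ) 1) := by
  have := (integrableOn_image_iff_integrableOn_abs_deriv_smul measurableSet_Ioi
    exp_neg_deriv exp_neg_inj (fun t : ℝ => t ^ k * (Real.log t) ^ 2))
  rw [exp_neg_image] at this
  rw [this]
  have base : IntegrableOn (fun x : ℝ => x ^ (2:ℝ) * rexp (-(((k:ℝ)+1)) * x ^ (1:ℝ)))
      (Ioi 0) := integrableOn_rpow_mul_exp_neg_mul_rpow (by norm_num) zero_lt_one (by positivity)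
  refine base.congr_fun (fun u hu => ?_) measurableSet_Ioi
  have hupos : (0:ℝ) < u := hu
  dsimp only
  rw [smul_eq_mul, abs_neg, abs_of_pos (Real.exp_pos _), Real.rpow_one, Real.log_exp,
    ← Real.exp_nat_mul, neg_sq, show (2:ℝ) = ((2:ℕ):ℝ) by norm_num, Real.rpow_natCast,
    show rexp (-u) * (rexp ((k:ℝ) * -u) * u ^ 2)
      = (rexp (-u) * rexp ((k:ℝ) * -u)) * u ^ 2 by ring, ← Real.exp_add]
  ring_nf

lemma summable3 : Summable (fun k : ℕ => 1 / ((k:ℝ) + 1) ^ 3) := by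
  have h : Summable (fun n : ℕ => 1 / (n:ℝ) ^ 3) := by
    rw [summable_one_div_nat_pow]; norm_num
  have := (summable_nat_add_iff 1).2 h
  simpa using this

lemma lintK (k : ℕ) :
    ∫⁻ t in Ioo (0:ℝ) 1, ‖(t:ℝ) ^ k * (Real.log t) ^ 2‖₊
      = ENNReal.ofReal (2 / ((k:ℝ) + 1) ^ 3) := by
  have hnn : 0 ≤ᵐ[volume.restrict (Ioo (0:ℝ) 1)] fun t : ℝ => t ^ k * (Real.log t) ^ 2 := by
    refine (ae_restrict_mem measurableSet_Ioo).mono fun t ht => ?_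
    have : (0:ℝ) < t := ht.1
    positivity
  rw [← integralK k, MeasureTheory.ofReal_integral_eq_lintegral_ofReal (integrableK k) hnn]
  refine lintegral_congr_ae ?_
  refine (ae_restrict_mem measurableSet_Ioo).mono fun t ht => ?_
  have h0 : (0:ℝ) ≤ t ^ k * (Real.log t) ^ 2 := by
    have : (0:ℝ) < t := ht.1
    positivity
  simp only []
  exact Real.enorm_eq_ofReal h0

lemma integral_series (g : ℕ → ℕ) (hg : Function.Injective g) :
    ∫ t in Ioo (0:ℝ) 1, ∑' k : ℕ, t ^ g k * (Real.log t) ^ 2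
      = ∑' k : ℕ, 2 / (((g k : ℕ):ℝ) + 1) ^ 3 := by
  rw [MeasureTheory.integral_tsum]
  · exact tsum_congr fun k => integralK (g k)
  · intro k
    exact ((measurable_id.pow_const (g k)).mul
      (Real.measurable_log.pow_const 2)).aestronglyMeasurable
  · have hs : Summable fun k : ℕ => 2 / (((g k : ℕ):ℝ) + 1) ^ 3 := by
      have : Summable fun n : ℕ => 2 / ((n:ℝ) + 1) ^ 3 := by
        simpa [div_eq_mul_inv, mul_comm] using summable3.mul_left 2
      exact this.comp_injective hg
    have hnn : ∀ k : ℕ, 0 ≤ 2 / (((g k : ℕ):ℝ) + 1) ^ 3 := fun k => by positivity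
    calc ∑' k : ℕ, ∫⁻ t in Ioo (0:ℝ) 1, ‖(t:ℝ) ^ g k * (Real.log t) ^ 2‖₊
        = ∑' k : ℕ, ENNReal.ofReal (2 / (((g k : ℕ):ℝ) + 1) ^ 3) :=
          tsum_congr fun k => lintK (g k)
      _ = ENNReal.ofReal (∑' k : ℕ, 2 / (((g k : ℕ):ℝ) + 1) ^ 3) :=
          (ENNReal.ofReal_tsum_of_nonneg hnn hs).symm
      _ ≠ ⊤ := ENNReal.ofReal_ne_top

lemma zeta3_pos : 0 < zetaVal 3 := by
  have h := Summable.le_tsum summable3 0 (fun j _ => by positivity)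
  simp only [Nat.cast_zero, zero_add, one_pow] at h
  have : (1:ℝ) ≤ zetaVal 3 := by simpa [zetaVal] using h
  linarith

lemma E1 : ∫ t in Ioo (0:ℝ) 1, (Real.log t) ^ 2 / (1 - t) = 2 * zetaVal 3 := by
  have h := integral_series id Function.injective_id
  rw [show (∫ t in Ioo (0:ℝ) 1, ∑' k : ℕ, t ^ id k * (Real.log t) ^ 2)
      = ∫ t in Ioo (0:ℝ) 1, (Real.log t) ^ 2 / (1 - t) from
    setIntegral_congr_fun measurableSet_Ioo fun t ht => ?_] at h
  · rw [h, show (fun k : ℕ => 2 / (((id k : ℕ):ℝ) + 1) ^ 3)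
      = fun k : ℕ => 2 * (1 / ((k:ℝ) + 1) ^ 3) from funext fun k => by
        simp [div_eq_mul_inv], tsum_mul_left, zetaVal]
  · have h1 : ∑' k : ℕ, t ^ (k : ℕ) * (Real.log t) ^ 2
        = (∑' k : ℕ, t ^ (k : ℕ)) * (Real.log t) ^ 2 := tsum_mul_right
    simp only [id] at *
    rw [h1, tsum_geometric_of_lt_one ht.1.le ht.2, div_eq_mul_inv, mul_comm]

lemma odd_sum : ∑' k : ℕ, 1 / ((2 * (k:ℝ)) + 1) ^ 3 = 7 / 8 * zetaVal 3 := by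
  set f : ℕ → ℝ := fun k => 1 / ((k : ℝ) + 1) ^ 3 with hf
  have he : Summable fun k => f (2 * k) :=
    summable3.comp_injective (mul_right_injective₀ two_ne_zero)
  have ho : Summable fun k => f (2 * k + 1) :=
    summable3.comp_injective fun a b hab => by omega
  have key := tsum_even_add_odd he ho
  have h1 : ∑' k : ℕ, f (2 * k + 1) = 1 / 8 * zetaVal 3 := by
    have : (fun k : ℕ => f (2 * k + 1)) = fun k : ℕ => 1 / 8 * f k := by
      funext k
      simp only [hf]
      push_cast
      have hk : ((k:ℝ) + 1) ^ 3 ≠ 0 := by positivity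
      have hk2 : (2 * (k:ℝ) + 1 + 1) ^ 3 ≠ 0 := by positivity
      field_simp
      ring
    rw [this, tsum_mul_left]
    rfl
  have h2 : (fun k : ℕ => f (2 * k)) = fun k : ℕ => 1 / ((2 * (k:ℝ)) + 1) ^ 3 := by
    funext k; simp only [hf]; norm_num
  rw [h2] at key
  have hz : ∑' k : ℕ, f k = zetaVal 3 := rfl
  rw [hz, h1] at key
  linarith

lemma E2 : ∫ t in Ioo (0:ℝ) 1, (Real.log t) ^ 2 / (1 - t ^ 2) = 7 / 4 * zetaVal 3 := by
  have h := integral_series (fun k => 2 * k) (mul_right_injective₀ two_ne_zero)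
  rw [show (∫ t in Ioo (0:ℝ) 1, ∑' k : ℕ, t ^ (2 * k) * (Real.log t) ^ 2)
      = ∫ t in Ioo (0:ℝ) 1, (Real.log t) ^ 2 / (1 - t ^ 2) from
    setIntegral_congr_fun measurableSet_Ioo fun t ht => ?_] at h
  · rw [h]
    have : (fun k : ℕ => 2 / (((2 * k : ℕ):ℝ) + 1) ^ 3)
        = fun k : ℕ => 2 * (1 / ((2 * (k:ℝ)) + 1) ^ 3) := by
      funext k; push_cast; ring
    rw [this, tsum_mul_left, odd_sum]; ring
  · have h1 : ∑' k : ℕ, t ^ (2 * k) * (Real.log t) ^ 2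
        = (∑' k : ℕ, (t ^ 2) ^ k) * (Real.log t) ^ 2 := by
      rw [tsum_mul_right]; congr 1; exact tsum_congr fun k => by rw [pow_mul]
    have ht2 : t ^ 2 < 1 := by nlinarith [ht.1, ht.2]
    rw [h1, tsum_geometric_of_lt_one (by positivity) ht2, div_eq_mul_inv, mul_comm]

lemma IB : ∫ x in Ioo (0:ℝ) 1, (Real.log (1 - x)) ^ 2 / x = 2 * zetaVal 3 := by
  have himg : (fun x : ℝ => 1 - x) '' Ioo 0 1 = Ioo (0:ℝ) 1 := by
    ext t
    constructor
    · rintro ⟨x, hx, rfl⟩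
      exact ⟨by simp only; linarith [hx.2], by simp only; linarith [hx.1]⟩
    · rintro ⟨h0, h1⟩; exact ⟨1 - t, ⟨by linarith, by linarith⟩, by simp⟩
  have hderiv : ∀ x ∈ Ioo (0:ℝ) 1,
      HasDerivWithinAt (fun x : ℝ => 1 - x) (-1) (Ioo 0 1) x := fun x _ =>
    ((hasDerivAt_const x (1:ℝ)).sub (hasDerivAt_id x)).hasDerivWithinAt.congr_deriv (by ring)
  have hinj : InjOn (fun x : ℝ => 1 - x) (Ioo 0 1) := fun a _ b _ h => by
    simp only at h; linarith
  have := integral_image_eq_integral_abs_deriv_smul measurableSet_Ioo hderiv hinj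
    (fun t : ℝ => (Real.log t) ^ 2 / (1 - t))
  rw [himg] at this
  have hcg : ∫ x in Ioo (0:ℝ) 1, (Real.log (1 - x)) ^ 2 / x
      = ∫ x in Ioo (0:ℝ) 1, |(-1:ℝ)| • ((Real.log (1 - x)) ^ 2 / (1 - (1 - x))) := by
    refine setIntegral_congr_fun measurableSet_Ioo fun x hx => ?_
    simp only [smul_eq_mul]
    rw [abs_neg, abs_one, one_mul]
    ring_nf
  rw [hcg, ← this, E1]

lemma IC' : ∫ x in Ioo (0:ℝ) 1, (Real.log (1 - x ^ 2)) ^ 2 / x = zetaVal 3 := by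
  have himg : (fun x : ℝ => x ^ 2) '' Ioo 0 1 = Ioo (0:ℝ) 1 := by
    ext t
    constructor
    · rintro ⟨x, hx, rfl⟩
      exact ⟨by simp only; nlinarith [hx.1], by simp only; nlinarith [hx.1, hx.2]⟩
    · rintro ⟨h0, h1⟩
      exact ⟨Real.sqrt t, ⟨Real.sqrt_pos.2 h0, by
        rw [show (1:ℝ) = Real.sqrt 1 by simp]
        exact Real.sqrt_lt_sqrt h0.le h1⟩, by simp [Real.sq_sqrt h0.le]⟩
  have hderiv : ∀ x ∈ Ioo (0:ℝ) 1,
      HasDerivWithinAt (fun x : ℝ => x ^ 2) (2 * x) (Ioo 0 1) x := fun x _ => by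
    simpa [mul_comm] using (hasDerivAt_pow 2 x).hasDerivWithinAt
  have hinj : InjOn (fun x : ℝ => x ^ 2) (Ioo 0 1) := fun a ha b hb h => by
    simp only at h
    have h2 : (a - b) * (a + b) = 0 := by ring_nf; linear_combination h
    rcases mul_eq_zero.1 h2 with h3 | h3
    · linarith
    · have : (0:ℝ) < a + b := by linarith [ha.1, hb.1]
      linarith
  have key := integral_image_eq_integral_abs_deriv_smul measurableSet_Ioo hderiv hinj
    (fun t : ℝ => (Real.log (1 - t)) ^ 2 / t)
  rw [himg, IB] at key
  have hcg : ∫ x in Ioo (0:ℝ) 1, |2 * x| • ((Real.log (1 - x ^ 2)) ^ 2 / x ^ 2)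
      = ∫ x in Ioo (0:ℝ) 1, 2 * ((Real.log (1 - x ^ 2)) ^ 2 / x) := by
    refine setIntegral_congr_fun measurableSet_Ioo fun x hx => ?_
    have hx0 : (0:ℝ) < x := hx.1
    rw [smul_eq_mul, abs_of_pos (by linarith)]
    field_simp
  rw [hcg, MeasureTheory.integral_const_mul] at key
  linarith

lemma IC : ∫ x in Ioo (0:ℝ) 1, (Real.log (1 - x) + Real.log (1 + x)) ^ 2 / x
    = zetaVal 3 := by
  rw [← IC']
  refine setIntegral_congr_fun measurableSet_Ioo fun x hx => ?_
  have h1 : (0:ℝ) < 1 - x := by linarith [hx.2]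
  have h2 : (0:ℝ) < 1 + x := by linarith [hx.1]
  rw [show (1:ℝ) - x ^ 2 = (1 - x) * (1 + x) by ring, Real.log_mul h1.ne' h2.ne']

lemma ID' : ∫ t in Ioo (0:ℝ) 1, (Real.log ((1 - t) / (1 + t))) ^ 2 / t
    = 7 / 2 * zetaVal 3 := by
  have himg : (fun x : ℝ => (1 - x) / (1 + x)) '' Ioo 0 1 = Ioo (0:ℝ) 1 := by
    ext t
    constructor
    · rintro ⟨x, hx, rfl⟩
      have h1 : (0:ℝ) < 1 - x := by linarith [hx.2]
      have h2 : (0:ℝ) < 1 + x := by linarith [hx.1]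
      constructor
      · simp only
        exact div_pos h1 h2
      · simp only
        rw [div_lt_one h2]
        linarith [hx.1]
    · rintro ⟨h0, h1⟩
      refine ⟨(1 - t) / (1 + t), ⟨div_pos (by linarith) (by linarith),
        by rw [div_lt_one (by linarith)]; linarith⟩, ?_⟩
      simp only
      have h2 : (0:ℝ) < 1 + t := by linarith
      field_simp
      ring
  have hderiv : ∀ x ∈ Ioo (0:ℝ) 1,
      HasDerivWithinAt (fun x : ℝ => (1 - x) / (1 + x)) (-2 / (1 + x) ^ 2) (Ioo 0 1) x := by
    intro x hx
    have h2 : (0:ℝ) < 1 + x := by linarith [hx.1]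
    have hd : HasDerivAt (fun x : ℝ => (1 - x) / (1 + x))
        (((0 - 1) * (1 + x) - (1 - x) * (0 + 1)) / (1 + x) ^ 2) x :=
      ((hasDerivAt_const x (1:ℝ)).sub (hasDerivAt_id x)).div
        ((hasDerivAt_const x (1:ℝ)).add (hasDerivAt_id x)) h2.ne'
    refine hd.hasDerivWithinAt.congr_deriv ?_
    field_simp
    ring
  have hinj : InjOn (fun x : ℝ => (1 - x) / (1 + x)) (Ioo 0 1) := by
    intro a ha b hb h
    simp only at h
    have h2 : (0:ℝ) < 1 + a := by linarith [ha.1]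
    have h3 : (0:ℝ) < 1 + b := by linarith [hb.1]
    rw [div_eq_div_iff h2.ne' h3.ne'] at h
    nlinarith
  have key := integral_image_eq_integral_abs_deriv_smul measurableSet_Ioo hderiv hinj
    (fun t : ℝ => (Real.log t) ^ 2 / (1 - t ^ 2))
  rw [himg, E2] at key
  have hcg : ∫ x in Ioo (0:ℝ) 1, |(-2) / (1 + x) ^ 2| •
        ((Real.log ((1 - x) / (1 + x))) ^ 2 / (1 - ((1 - x) / (1 + x)) ^ 2))
      = ∫ x in Ioo (0:ℝ) 1, 2⁻¹ * ((Real.log ((1 - x) / (1 + x))) ^ 2 / x) := by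
    refine setIntegral_congr_fun measurableSet_Ioo fun x hx => ?_
    have hx0 : (0:ℝ) < x := hx.1
    have h2 : (0:ℝ) < 1 + x := by linarith
    have habs : |(-2:ℝ) / (1 + x) ^ 2| = 2 / (1 + x) ^ 2 := by
      rw [abs_div, abs_neg, abs_of_pos (by norm_num : (0:ℝ) < 2), abs_of_pos (by positivity)]
    have hden : 1 - ((1 - x) / (1 + x)) ^ 2 = 4 * x / (1 + x) ^ 2 := by
      field_simp
      ring
    rw [smul_eq_mul, habs, hden]
    have h4 : (4:ℝ) * x ≠ 0 := by positivity
    have hp : ((1:ℝ) + x) ^ 2 ≠ 0 := by positivity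
    have hx' : x ≠ 0 := hx0.ne'
    have hpx : (1:ℝ) + x ≠ 0 := h2.ne'
    field_simp
    ring
  rw [hcg, MeasureTheory.integral_const_mul] at key
  linarith

lemma ID : ∫ x in Ioo (0:ℝ) 1, (Real.log (1 - x) - Real.log (1 + x)) ^ 2 / x
    = 7 / 2 * zetaVal 3 := by
  rw [← ID']
  refine setIntegral_congr_fun measurableSet_Ioo fun x hx => ?_
  have h1 : (0:ℝ) < 1 - x := by linarith [hx.2]
  have h2 : (0:ℝ) < 1 + x := by linarith [hx.1]
  rw [Real.log_div h1.ne' h2.ne']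

lemma intg_of_ne {f : ℝ → ℝ} {s : Set ℝ} (h : (∫ x in s, f x) ≠ 0) : IntegrableOn f s := by
  by_contra hc
  exact h (MeasureTheory.integral_undef hc)

theorem stmt2 : ∫ u in Set.Ioi (0:ℝ), (Real.log (1 + Real.exp (-u)))^2 = zetaVal 3 / 4 := by
  have hz := zeta3_pos
  have hsub := subst_exp (fun x => (Real.log (1 + x)) ^ 2 / x)
  have hrhs : ∫ u in Ioi (0:ℝ), rexp (-u) * ((Real.log (1 + rexp (-u))) ^ 2 / rexp (-u))
      = ∫ u in Ioi (0:ℝ), (Real.log (1 + rexp (-u))) ^ 2 :=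
    setIntegral_congr_fun measurableSet_Ioi fun u _ => by
      rw [mul_div_cancel₀ _ (Real.exp_ne_zero (-u))]
  rw [hrhs] at hsub
  rw [← hsub]
  -- now compute ∫ x in Ioo 0 1, (log (1+x))^2 / x
  have hF1 : IntegrableOn (fun x : ℝ => (Real.log (1 - x) + Real.log (1 + x)) ^ 2 / x)
      (Ioo 0 1) := intg_of_ne (by rw [IC]; linarith)
  have hF2 : IntegrableOn (fun x : ℝ => (Real.log (1 - x) - Real.log (1 + x)) ^ 2 / x)
      (Ioo 0 1) := intg_of_ne (by rw [ID]; linarith)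
  have hF3 : IntegrableOn (fun x : ℝ => (Real.log (1 - x)) ^ 2 / x)
      (Ioo 0 1) := intg_of_ne (by rw [IB]; linarith)
  have hpt : ∫ x in Ioo (0:ℝ) 1, (Real.log (1 + x)) ^ 2 / x
      = ∫ x in Ioo (0:ℝ) 1,
        ((1/2) * ((Real.log (1 - x) + Real.log (1 + x)) ^ 2 / x)
          + (1/2) * ((Real.log (1 - x) - Real.log (1 + x)) ^ 2 / x)
          - (Real.log (1 - x)) ^ 2 / x) := by
    refine setIntegral_congr_fun measurableSet_Ioo fun x hx => ?_
    have hx0 : x ≠ 0 := hx.1.ne'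
    field_simp
    ring
  have hadd : Integrable (fun x : ℝ => (1/2) * ((Real.log (1 - x) + Real.log (1 + x)) ^ 2 / x)
      + (1/2) * ((Real.log (1 - x) - Real.log (1 + x)) ^ 2 / x))
      (volume.restrict (Ioo 0 1)) := (hF1.const_mul (1/2)).add (hF2.const_mul (1/2))
  rw [hpt, MeasureTheory.integral_sub hadd hF3,
    MeasureTheory.integral_add (hF1.const_mul (1/2)) (hF2.const_mul (1/2)),
    MeasureTheory.integral_const_mul, MeasureTheory.integral_const_mul, IB, IC, ID]
  linarith
end

section
/- The integral of ln(1+e^{-u})⁴ over u from 0 to ∞ equals (2/3)π²ln(2)³ − (21/2)ln(2)²ζ(3) − 24·ln(2)·Li₄(1/2) − (4/5)ln(2)⁵ − 24·Li₅(1/2) + 24ζ(5). -/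
open MeasureTheory Real

open Set Filter Topology


lemma summable_zterm {p : ℕ} (hp : 2 ≤ p) : Summable (fun k : ℕ => 1/((k:ℝ)+1)^p) := by
  have h := (Real.summable_one_div_nat_pow (p := p)).mpr hp
  have := (summable_nat_add_iff (f := fun n : ℕ => 1/(n:ℝ)^p) 1).mpr h
  simpa using this

lemma summable_qterm (p : ℕ) : Summable (fun k : ℕ => (1/2:ℝ)^(k+1)/((k:ℝ)+1)^p) := by
  refine Summable.of_nonneg_of_le (fun k => by positivity) (fun k => ?_)
    ((summable_geometric_of_lt_one (by norm_num) (by norm_num : (1/2:ℝ) < 1)).mul_left (1/2))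
  have h1 : (1:ℝ) ≤ ((k:ℝ)+1)^p := one_le_pow₀ (by linarith [Nat.cast_nonneg (α := ℝ) k])
  calc (1/2:ℝ)^(k+1)/((k:ℝ)+1)^p ≤ (1/2:ℝ)^(k+1)/1 := by
        apply div_le_div_of_nonneg_left (by positivity) one_pos h1
    _ = 1/2 * (1/2:ℝ)^k := by ring

lemma sumLemma {s : Set ℝ} (hs : MeasurableSet s) {f : ℕ → ℝ → ℝ} {g : ℝ → ℝ} {r : ℕ → ℝ}
    (hgm : AEStronglyMeasurable g (volume.restrict s))
    (hfm : ∀ n, AEStronglyMeasurable (f n) (volume.restrict s))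
    (hnn : ∀ n, ∀ x ∈ s, 0 ≤ f n x)
    (hsum : ∀ x ∈ s, HasSum (fun n => f n x) (g x))
    (hfi : ∀ n, IntegrableOn (f n) s)
    (hint : ∀ n, ∫ x in s, f n x = r n)
    (hr : Summable r) :
    IntegrableOn g s ∧ ∫ x in s, g x = ∑' n, r n := by
  have hr0 : ∀ n, 0 ≤ r n := by
    intro n
    rw [← hint n]
    exact setIntegral_nonneg hs (hnn n)
  have hterm : ∀ n, ∫⁻ x in s, ‖f n x‖ₑ = ENNReal.ofReal (r n) := by
    intro n
    rw [← ofReal_integral_norm_eq_lintegral_enorm (hfi n)]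
    congr 1
    rw [← hint n]
    refine setIntegral_congr_fun hs (fun x hx => ?_)
    exact abs_of_nonneg (hnn n x hx)
  have hkey : ∑' n, ∫⁻ x in s, ‖f n x‖ₑ = ENNReal.ofReal (∑' n, r n) := by
    rw [tsum_congr hterm, ENNReal.ofReal_tsum_of_nonneg hr0 hr]
  have hne : ∑' n, ∫⁻ x in s, ‖f n x‖ₑ ≠ ⊤ := by
    rw [hkey]; exact ENNReal.ofReal_ne_top
  have hae : ∀ᵐ x ∂(volume.restrict s), g x = ∑' n, f n x := by
    rw [ae_restrict_iff' hs]
    exact Eventually.of_forall (fun x hx => ((hsum x hx).tsum_eq).symm)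
  have heq : ∫ x in s, g x = ∑' n, r n := by
    rw [integral_congr_ae hae, integral_tsum hfm hne, tsum_congr hint]
  refine ⟨⟨hgm, ?_⟩, heq⟩
  rw [HasFiniteIntegral]
  have hgae : ∀ᵐ x ∂(volume.restrict s), (‖g x‖ₑ : ENNReal) = ∑' n, (‖f n x‖ₑ : ENNReal) := by
    rw [ae_restrict_iff' hs]
    refine Eventually.of_forall (fun x hx => ?_)
    have h1 : g x = ∑' n, f n x := ((hsum x hx).tsum_eq).symm
    have h2 : (‖g x‖ₑ : ENNReal) = ENNReal.ofReal (g x) := by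
      rw [← ofReal_norm, Real.norm_eq_abs,
        abs_of_nonneg ((hsum x hx).nonneg (fun n => hnn n x hx))]
    rw [h2, h1, ENNReal.ofReal_tsum_of_nonneg (fun n => hnn n x hx) (hsum x hx).summable]
    refine tsum_congr (fun n => ?_)
    rw [← ofReal_norm, Real.norm_eq_abs, abs_of_nonneg (hnn n x hx)]
  rw [lintegral_congr_ae hgae, lintegral_tsum (fun n => (hfm n).enorm), hkey]
  exact ENNReal.ofReal_lt_top

lemma ioo_to_interval (a b : ℝ) (h : a ≤ b) (f : ℝ → ℝ) :
    ∫ x in Ioo a b, f x = ∫ x in a..b, f x := by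
  rw [intervalIntegral.integral_of_le h, integral_Ioc_eq_integral_Ioo]

lemma intB1 (k : ℕ) :
    ∫ x in Ioo (1/2:ℝ) 1, x^k * (-Real.log x) =
      1/((k:ℝ)+1)^2 - (1/2:ℝ)^(k+1)*(Real.log 2/((k:ℝ)+1) + 1/((k:ℝ)+1)^2) := by
  have hm : (0:ℝ) < (k:ℝ)+1 := by positivity
  set m : ℝ := (k:ℝ)+1 with hmdef
  rw [ioo_to_interval _ _ (by norm_num)]
  rw [intervalIntegral.integral_eq_sub_of_hasDerivAt
    (f := fun x : ℝ => x^(k+1) * ((-1/m) * Real.log x + 1/m^2))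
    (f' := fun x : ℝ => x^k * (-Real.log x)) ?_ ?_]
  · have hl : Real.log (1/2) = -Real.log 2 := by rw [one_div, Real.log_inv]
    simp only [Real.log_one, one_pow, hl]
    field_simp
    ring
  · intro x hx
    rw [uIcc_of_le (by norm_num)] at hx
    have hx0 : x ≠ 0 := by
      have := hx.1; intro h; rw [h] at this; norm_num at this
    have h := (hasDerivAt_pow (k+1) x).mul
      (((Real.hasDerivAt_log hx0).const_mul (-1/m)).add_const (1/m^2))
    refine h.congr_deriv ?_
    simp only [Nat.add_sub_cancel, Nat.cast_add, Nat.cast_one, ← hmdef]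
    field_simp
    ring
  · apply ContinuousOn.intervalIntegrable
    rw [uIcc_of_le (by norm_num)]
    refine ContinuousOn.mul (continuous_pow k).continuousOn ?_
    refine ContinuousOn.neg (Real.continuousOn_log.mono ?_)
    intro x hx
    have := hx.1
    simp only [mem_compl_iff, mem_singleton_iff]
    intro h; rw [h] at this; norm_num at this

lemma intB2 (k : ℕ) :
    ∫ x in Ioo (1/2:ℝ) 1, x^k * (Real.log x)^2 =
      2/((k:ℝ)+1)^3 - (1/2:ℝ)^(k+1)*((Real.log 2)^2/((k:ℝ)+1) + 2*Real.log 2/((k:ℝ)+1)^2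
        + 2/((k:ℝ)+1)^3) := by
  have hm : (0:ℝ) < (k:ℝ)+1 := by positivity
  set m : ℝ := (k:ℝ)+1 with hmdef
  rw [ioo_to_interval _ _ (by norm_num)]
  rw [intervalIntegral.integral_eq_sub_of_hasDerivAt
    (f := fun x : ℝ => x^(k+1) * ((1/m) * (Real.log x)^2 - (2/m^2) * Real.log x + 2/m^3))
    (f' := fun x : ℝ => x^k * (Real.log x)^2) ?_ ?_]
  · have hl : Real.log (1/2) = -Real.log 2 := by rw [one_div, Real.log_inv]
    simp only [Real.log_one, one_pow, hl]
    field_simp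
    ring
  · intro x hx
    rw [uIcc_of_le (by norm_num)] at hx
    have hx0 : x ≠ 0 := by
      have := hx.1; intro h; rw [h] at this; norm_num at this
    have hlog := Real.hasDerivAt_log hx0
    have h := (hasDerivAt_pow (k+1) x).mul
      ((((hlog.pow 2).const_mul (1/m)).sub (hlog.const_mul (2/m^2))).add_const (2/m^3))
    refine h.congr_deriv ?_
    simp only [Nat.add_sub_cancel, Nat.cast_add, Nat.cast_one, ← hmdef, Nat.cast_ofNat, Pi.sub_apply, Pi.add_apply, Pi.pow_apply]
    field_simp
    ring
  · apply ContinuousOn.intervalIntegrable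
    rw [uIcc_of_le (by norm_num)]
    refine ContinuousOn.mul (continuous_pow k).continuousOn (ContinuousOn.pow ?_ 2)
    refine Real.continuousOn_log.mono ?_
    intro x hx
    have := hx.1
    simp only [mem_compl_iff, mem_singleton_iff]
    intro h; rw [h] at this; norm_num at this

lemma intB4 (k : ℕ) :
    ∫ x in Ioo (1/2:ℝ) 1, x^k * (Real.log x)^4 =
      24/((k:ℝ)+1)^5 - (1/2:ℝ)^(k+1)*((Real.log 2)^4/((k:ℝ)+1) + 4*(Real.log 2)^3/((k:ℝ)+1)^2
        + 12*(Real.log 2)^2/((k:ℝ)+1)^3 + 24*Real.log 2/((k:ℝ)+1)^4 + 24/((k:ℝ)+1)^5) := by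
  have hm : (0:ℝ) < (k:ℝ)+1 := by positivity
  set m : ℝ := (k:ℝ)+1 with hmdef
  rw [ioo_to_interval _ _ (by norm_num)]
  rw [intervalIntegral.integral_eq_sub_of_hasDerivAt
    (f := fun x : ℝ => x^(k+1) * ((1/m) * (Real.log x)^4 - (4/m^2) * (Real.log x)^3
      + (12/m^3) * (Real.log x)^2 - (24/m^4) * Real.log x + 24/m^5))
    (f' := fun x : ℝ => x^k * (Real.log x)^4) ?_ ?_]
  · have hl : Real.log (1/2) = -Real.log 2 := by rw [one_div, Real.log_inv]
    simp only [Real.log_one, one_pow, hl]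
    field_simp
    ring
  · intro x hx
    rw [uIcc_of_le (by norm_num)] at hx
    have hx0 : x ≠ 0 := by
      have := hx.1; intro h; rw [h] at this; norm_num at this
    have hlog := Real.hasDerivAt_log hx0
    have h := (hasDerivAt_pow (k+1) x).mul
      (((((((hlog.pow 4).const_mul (1/m)).sub ((hlog.pow 3).const_mul (4/m^2))).add
        ((hlog.pow 2).const_mul (12/m^3))).sub (hlog.const_mul (24/m^4))).add_const (24/m^5)))
    refine h.congr_deriv ?_
    simp only [Nat.add_sub_cancel, Nat.cast_add, Nat.cast_one, ← hmdef, Nat.cast_ofNat, Pi.sub_apply, Pi.add_apply, Pi.pow_apply]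
    field_simp
    ring
  · apply ContinuousOn.intervalIntegrable
    rw [uIcc_of_le (by norm_num)]
    refine ContinuousOn.mul (continuous_pow k).continuousOn (ContinuousOn.pow ?_ 4)
    refine Real.continuousOn_log.mono ?_
    intro x hx
    have := hx.1
    simp only [mem_compl_iff, mem_singleton_iff]
    intro h; rw [h] at this; norm_num at this

lemma intC (j : ℕ) (hj : j ≠ 0) :
    ∫ x in Ioo (1/2:ℝ) 1, (Real.log x)^j / x = -(-Real.log 2)^(j+1)/((j:ℝ)+1) := by
  have hm : (0:ℝ) < (j:ℝ)+1 := by positivity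
  rw [ioo_to_interval _ _ (by norm_num)]
  rw [intervalIntegral.integral_eq_sub_of_hasDerivAt
    (f := fun x : ℝ => (Real.log x)^(j+1)/((j:ℝ)+1))
    (f' := fun x : ℝ => (Real.log x)^j / x) ?_ ?_]
  · have hl : Real.log (1/2) = -Real.log 2 := by rw [one_div, Real.log_inv]
    simp only [Real.log_one, hl, zero_pow (by omega : j+1 ≠ 0)]
    ring
  · intro x hx
    rw [uIcc_of_le (by norm_num)] at hx
    have hx0 : x ≠ 0 := by
      have := hx.1; intro h; rw [h] at this; norm_num at this
    have h := ((Real.hasDerivAt_log hx0).pow (j+1)).div_const ((j:ℝ)+1)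
    refine h.congr_deriv ?_
    simp only [Nat.add_sub_cancel, Nat.cast_add, Nat.cast_one]
    field_simp
  · apply ContinuousOn.intervalIntegrable
    rw [uIcc_of_le (by norm_num)]
    have hlog : ContinuousOn Real.log (Icc (1/2:ℝ) 1) := by
      refine Real.continuousOn_log.mono ?_
      intro x hx
      have := hx.1
      simp only [mem_compl_iff, mem_singleton_iff]
      intro h; rw [h] at this; norm_num at this
    exact (hlog.pow j).div continuousOn_id (fun x hx => by
      have := hx.1; intro h; rw [h] at this; norm_num at this)

lemma intB0 (k : ℕ) : ∫ t in Ioo (0:ℝ) 1, t^k = 1/((k:ℝ)+1) := by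
  rw [ioo_to_interval _ _ (by norm_num), integral_pow]
  simp

lemma subst_pair {s t : Set ℝ} (hs : MeasurableSet s) {φ φ' : ℝ → ℝ}
    (himg : φ '' s = t) (hd : ∀ x ∈ s, HasDerivWithinAt φ (φ' x) s x) (hinj : InjOn φ s)
    (g h : ℝ → ℝ) (hgh : ∀ x ∈ s, |φ' x| * g (φ x) = h x) :
    (∫ x in t, g x = ∫ x in s, h x) ∧ (IntegrableOn g t ↔ IntegrableOn h s) := by
  have heq : EqOn (fun x => |φ' x| • g (φ x)) h s := fun x hx => by
    simpa [smul_eq_mul] using hgh x hx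
  constructor
  · rw [← himg, integral_image_eq_integral_abs_deriv_smul hs hd hinj g]
    exact setIntegral_congr_fun hs heq
  · rw [← himg, integrableOn_image_iff_integrableOn_abs_deriv_smul hs hd hinj g]
    exact integrableOn_congr_fun heq hs

-- φ₁ : u ↦ (1+e^{-u})⁻¹ on Ioi 0
lemma phi1_img : (fun u : ℝ => (1 + Real.exp (-u))⁻¹) '' Ioi 0 = Ioo (1/2:ℝ) 1 := by
  ext x
  simp only [mem_image, mem_Ioi, mem_Ioo]
  constructor
  · rintro ⟨u, hu, rfl⟩
    have he1 : Real.exp (-u) < 1 := Real.exp_lt_one_iff.mpr (by linarith)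
    have he0 : 0 < Real.exp (-u) := Real.exp_pos _
    constructor
    · rw [show (1/2:ℝ) = 2⁻¹ by norm_num]
      exact inv_strictAnti₀ (by linarith) (by linarith)
    · exact inv_lt_one_of_one_lt₀ (by linarith)
  · rintro ⟨h1, h2⟩
    have hx0 : 0 < x := by linarith
    have h1x : 0 < 1 - x := by linarith
    refine ⟨Real.log (x/(1-x)), ?_, ?_⟩
    · apply Real.log_pos
      rw [lt_div_iff₀ h1x]
      linarith
    · have hd : x/(1-x) > 0 := by positivity
      rw [← Real.log_inv, Real.exp_log (by positivity)]
      rw [show (x/(1-x))⁻¹ = (1-x)/x by rw [inv_div]]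
      field_simp
      ring

lemma phi1_inj : InjOn (fun u : ℝ => (1 + Real.exp (-u))⁻¹) (Ioi 0) := by
  intro a _ b _ h
  simp only at h
  have h2 := inv_injective h
  have h3 : Real.exp (-a) = Real.exp (-b) := by linarith
  have := Real.exp_injective h3
  linarith

lemma phi1_deriv (u : ℝ) :
    HasDerivAt (fun u : ℝ => (1 + Real.exp (-u))⁻¹)
      (Real.exp (-u)/(1 + Real.exp (-u))^2) u := by
  have hne : (1 + Real.exp (-u)) ≠ 0 := by positivity
  have h := (((hasDerivAt_neg u).exp).const_add 1).inv hne
  refine h.congr_deriv ?_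
  field_simp

-- φ₂ : t ↦ (1+t)⁻¹ on Ioo 0 1
lemma phi2_img : (fun t : ℝ => (1 + t)⁻¹) '' Ioo 0 1 = Ioo (1/2:ℝ) 1 := by
  ext x
  simp only [mem_image, mem_Ioo]
  constructor
  · rintro ⟨t, ⟨ht0, ht1⟩, rfl⟩
    constructor
    · rw [show (1/2:ℝ) = 2⁻¹ by norm_num]
      exact inv_strictAnti₀ (by linarith) (by linarith)
    · exact inv_lt_one_of_one_lt₀ (by linarith)
  · rintro ⟨h1, h2⟩
    have hx0 : 0 < x := by linarith
    have h1x : 0 < 1 - x := by linarith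
    refine ⟨(1-x)/x, ⟨by positivity, ?_⟩, ?_⟩
    · rw [div_lt_one hx0]; linarith
    · have : 1 + (1-x)/x = 1/x := by field_simp; ring
      rw [this, one_div, inv_inv]

lemma phi2_inj : InjOn (fun t : ℝ => (1 + t)⁻¹) (Ioo 0 1) := by
  intro a _ b _ h
  simp only at h
  have := inv_injective h
  linarith

lemma phi2_deriv (t : ℝ) (ht : t ∈ Ioo (0:ℝ) 1) :
    HasDerivAt (fun t : ℝ => (1 + t)⁻¹) (-(1/(1+t)^2)) t := by
  have hne : (1 + t) ≠ 0 := by nlinarith [ht.1]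
  have h := ((hasDerivAt_id t).const_add 1).inv hne
  refine h.congr_deriv ?_
  simp only [id]
  field_simp

-- φ₃ : t ↦ t² on Ioo 0 1
lemma phi3_img : (fun t : ℝ => t^2) '' Ioo 0 1 = Ioo (0:ℝ) 1 := by
  ext x
  simp only [mem_image, mem_Ioo]
  constructor
  · rintro ⟨t, ⟨ht0, ht1⟩, rfl⟩
    constructor
    · positivity
    · nlinarith
  · rintro ⟨h1, h2⟩
    refine ⟨Real.sqrt x, ⟨Real.sqrt_pos.mpr h1, ?_⟩, Real.sq_sqrt h1.le⟩
    have := Real.sqrt_lt_sqrt h1.le h2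
    simpa using this

lemma phi3_inj : InjOn (fun t : ℝ => t^2) (Ioo 0 1) := by
  intro a ha b hb h
  simp only at h
  nlinarith [ha.1, hb.1]

-- φ₄ : t ↦ (1-t)/(1+t) on Ioo 0 1
lemma phi4_mem {t : ℝ} (ht : t ∈ Ioo (0:ℝ) 1) : (1-t)/(1+t) ∈ Ioo (0:ℝ) 1 := by
  obtain ⟨h0, h1⟩ := ht
  have h1t : 0 < 1 - t := by linarith
  constructor
  · positivity
  · rw [div_lt_one (by linarith)]; linarith

lemma phi4_invol {t : ℝ} (ht : t ∈ Ioo (0:ℝ) 1) : (1-(1-t)/(1+t))/(1+(1-t)/(1+t)) = t := by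
  have h1 : (1:ℝ) + t ≠ 0 := by nlinarith [ht.1]
  have h2 : 1+(1-t)/(1+t) ≠ 0 := by
    rw [show 1+(1-t)/(1+t) = 2/(1+t) by field_simp; ring]
    positivity
  field_simp
  ring

lemma phi4_img : (fun t : ℝ => (1-t)/(1+t)) '' Ioo 0 1 = Ioo (0:ℝ) 1 := by
  ext x
  simp only [mem_image]
  constructor
  · rintro ⟨t, ht, rfl⟩
    exact phi4_mem ht
  · intro hx
    exact ⟨(1-x)/(1+x), phi4_mem hx, phi4_invol hx⟩

lemma phi4_inj : InjOn (fun t : ℝ => (1-t)/(1+t)) (Ioo 0 1) := by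
  intro a ha b hb h
  simp only at h
  have h1 : (1:ℝ) + a ≠ 0 := by nlinarith [ha.1]
  have h2 : (1:ℝ) + b ≠ 0 := by nlinarith [hb.1]
  field_simp at h
  nlinarith

lemma phi4_deriv (t : ℝ) (ht : t ∈ Ioo (0:ℝ) 1) :
    HasDerivAt (fun t : ℝ => (1-t)/(1+t)) (-(2/(1+t)^2)) t := by
  have hne : (1 + t) ≠ 0 := by nlinarith [ht.1]
  have h := (((hasDerivAt_id t).neg.const_add 1).div ((hasDerivAt_id t).const_add 1) hne)
  refine h.congr_deriv ?_
  simp only [id, Pi.neg_apply]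
  field_simp
  ring

-- φ₅ : t ↦ 1 - t on Ioo 0 1
lemma phi5_img : (fun t : ℝ => 1 - t) '' Ioo 0 1 = Ioo (0:ℝ) 1 := by
  ext x
  simp only [mem_image, mem_Ioo]
  constructor
  · rintro ⟨t, ⟨h0, h1⟩, rfl⟩
    constructor <;> linarith
  · rintro ⟨h0, h1⟩
    exact ⟨1-x, ⟨by linarith, by linarith⟩, by ring⟩

lemma phi5_inj : InjOn (fun t : ℝ => 1 - t) (Ioo 0 1) := by
  intro a _ b _ h
  simp only at h
  linarith

lemma SI : (∫ x in Ioo (1/2:ℝ) 1, (Real.log x)^4/(x*(1-x)) =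
      ∫ u in Ioi (0:ℝ), (Real.log (1 + Real.exp (-u)))^4) ∧
    (IntegrableOn (fun x => (Real.log x)^4/(x*(1-x))) (Ioo (1/2:ℝ) 1) ↔
      IntegrableOn (fun u => (Real.log (1 + Real.exp (-u)))^4) (Ioi (0:ℝ))) := by
  refine subst_pair measurableSet_Ioi phi1_img
    (fun u _ => (phi1_deriv u).hasDerivWithinAt) phi1_inj _ _ ?_
  intro u _
  have he : 0 < Real.exp (-u) := Real.exp_pos _
  set e := Real.exp (-u) with hedef
  have h1 : (0:ℝ) < 1 + e := by linarith
  rw [abs_of_pos (by positivity), Real.log_inv,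
    show 1-(1+e)⁻¹ = e/(1+e) by field_simp; ring]
  field_simp

lemma SJ1 : (∫ x in Ioo (1/2:ℝ) 1, (-Real.log x)/(x*(1-x)) =
      ∫ t in Ioo (0:ℝ) 1, Real.log (1+t)/t) ∧
    (IntegrableOn (fun x => (-Real.log x)/(x*(1-x))) (Ioo (1/2:ℝ) 1) ↔
      IntegrableOn (fun t => Real.log (1+t)/t) (Ioo (0:ℝ) 1)) := by
  refine subst_pair measurableSet_Ioo phi2_img
    (fun t ht => (phi2_deriv t ht).hasDerivWithinAt) phi2_inj _ _ ?_
  intro t ht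
  obtain ⟨h0, h1⟩ := ht
  have h1t : (0:ℝ) < 1 + t := by linarith
  rw [abs_neg, abs_of_pos (by positivity), Real.log_inv,
    show 1-(1+t)⁻¹ = t/(1+t) by field_simp; ring]
  field_simp

lemma SJ2 : (∫ x in Ioo (1/2:ℝ) 1, (Real.log x)^2/(x*(1-x)) =
      ∫ t in Ioo (0:ℝ) 1, (Real.log (1+t))^2/t) ∧
    (IntegrableOn (fun x => (Real.log x)^2/(x*(1-x))) (Ioo (1/2:ℝ) 1) ↔
      IntegrableOn (fun t => (Real.log (1+t))^2/t) (Ioo (0:ℝ) 1)) := by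
  refine subst_pair measurableSet_Ioo phi2_img
    (fun t ht => (phi2_deriv t ht).hasDerivWithinAt) phi2_inj _ _ ?_
  intro t ht
  obtain ⟨h0, h1⟩ := ht
  have h1t : (0:ℝ) < 1 + t := by linarith
  rw [abs_neg, abs_of_pos (by positivity), Real.log_inv,
    show 1-(1+t)⁻¹ = t/(1+t) by field_simp; ring]
  field_simp

lemma SA : (∫ u in Ioo (0:ℝ) 1, (Real.log u)^2/(1-u) =
      ∫ t in Ioo (0:ℝ) 1, (Real.log (1-t))^2/t) ∧
    (IntegrableOn (fun u => (Real.log u)^2/(1-u)) (Ioo (0:ℝ) 1) ↔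
      IntegrableOn (fun t => (Real.log (1-t))^2/t) (Ioo (0:ℝ) 1)) := by
  refine subst_pair measurableSet_Ioo phi5_img
    (fun t _ => ((hasDerivAt_id t).const_sub 1).hasDerivWithinAt) phi5_inj _ _ ?_
  intro t ht
  obtain ⟨h0, h1⟩ := ht
  rw [abs_neg, abs_one, one_mul, show 1-(1-t) = t by ring]

lemma SD2 : (∫ u in Ioo (0:ℝ) 1, (Real.log (1-u))^2/u =
      ∫ t in Ioo (0:ℝ) 1, 2*((Real.log (1-t^2))^2/t)) ∧
    (IntegrableOn (fun u => (Real.log (1-u))^2/u) (Ioo (0:ℝ) 1) ↔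
      IntegrableOn (fun t => 2*((Real.log (1-t^2))^2/t)) (Ioo (0:ℝ) 1)) := by
  refine subst_pair measurableSet_Ioo phi3_img
    (fun t _ => (hasDerivAt_pow 2 t).hasDerivWithinAt) phi3_inj _ _ ?_
  intro t ht
  obtain ⟨h0, h1⟩ := ht
  simp only [Nat.cast_ofNat, pow_one]
  rw [abs_of_pos (by positivity)]
  field_simp
  ring

lemma SD1 : (∫ u in Ioo (0:ℝ) 1, (-Real.log (1-u))/u =
      ∫ t in Ioo (0:ℝ) 1, 2*((-Real.log (1-t^2))/t)) ∧
    (IntegrableOn (fun u => (-Real.log (1-u))/u) (Ioo (0:ℝ) 1) ↔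
      IntegrableOn (fun t => 2*((-Real.log (1-t^2))/t)) (Ioo (0:ℝ) 1)) := by
  refine subst_pair measurableSet_Ioo phi3_img
    (fun t _ => (hasDerivAt_pow 2 t).hasDerivWithinAt) phi3_inj _ _ ?_
  intro t ht
  obtain ⟨h0, h1⟩ := ht
  simp only [Nat.cast_ofNat, pow_one]
  rw [abs_of_pos (by positivity)]
  field_simp
  ring

lemma SE : (∫ w in Ioo (0:ℝ) 1, 2*(Real.log w)^2/(1-w^2) =
      ∫ t in Ioo (0:ℝ) 1, (Real.log ((1-t)/(1+t)))^2/t) ∧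
    (IntegrableOn (fun w => 2*(Real.log w)^2/(1-w^2)) (Ioo (0:ℝ) 1) ↔
      IntegrableOn (fun t => (Real.log ((1-t)/(1+t)))^2/t) (Ioo (0:ℝ) 1)) := by
  refine subst_pair measurableSet_Ioo phi4_img
    (fun t ht => (phi4_deriv t ht).hasDerivWithinAt) phi4_inj _ _ ?_
  intro t ht
  obtain ⟨h0, h1⟩ := ht
  have h1t : (0:ℝ) < 1 + t := by linarith
  rw [abs_neg, abs_of_pos (by positivity),
    show 1-((1-t)/(1+t))^2 = 4*t/(1+t)^2 by field_simp; ring]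
  field_simp
  ring

-- exponential substitution machinery
lemma expNegImage : (fun v : ℝ => Real.exp (-v)) '' Ioi 0 = Ioo (0:ℝ) 1 := by
  ext u
  constructor
  · rintro ⟨v, hv, rfl⟩
    refine ⟨Real.exp_pos _, ?_⟩
    rw [← Real.exp_zero]
    exact Real.exp_lt_exp.mpr (by simpa using hv)
  · rintro ⟨h0, h1⟩
    refine ⟨-Real.log u, by simpa using Real.log_neg h0 h1, by simp [Real.exp_log h0]⟩

lemma expNegInj : InjOn (fun v : ℝ => Real.exp (-v)) (Ioi 0) :=
  (Real.exp_injective.comp neg_injective).injOn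

lemma tendsto_aux (c : ℝ) (hc : 0 < c) (n : ℕ) :
    Tendsto (fun v : ℝ => v^n * Real.exp (-(c*v))) atTop (𝓝 0) := by
  have h1 : Tendsto (fun v : ℝ => c * v) atTop atTop :=
    Tendsto.const_mul_atTop hc tendsto_id
  have h2 : Tendsto (fun v : ℝ => (c*v)^n * Real.exp (-(c*v))) atTop (𝓝 0) :=
    (tendsto_pow_mul_exp_neg_atTop_nhds_zero n).comp h1
  have h3 := h2.const_mul (1/c^n)
  rw [mul_zero] at h3
  refine h3.congr (fun v => ?_)
  field_simp
  ring

lemma SB (j : ℕ) : (∫ u in Ioo (0:ℝ) 1, u^j * (Real.log u)^2 =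
      ∫ v in Ioi (0:ℝ), Real.exp (-(((j:ℝ)+1)*v)) * v^2) ∧
    (IntegrableOn (fun u => u^j * (Real.log u)^2) (Ioo (0:ℝ) 1) ↔
      IntegrableOn (fun v => Real.exp (-(((j:ℝ)+1)*v)) * v^2) (Ioi (0:ℝ))) := by
  refine subst_pair measurableSet_Ioi expNegImage
    (fun v _ => ((hasDerivAt_neg v).exp).hasDerivWithinAt) expNegInj _ _ ?_
  intro v _
  rw [Real.log_exp, abs_mul, abs_neg, abs_one, mul_one, abs_of_pos (Real.exp_pos _),
    ← Real.exp_nat_mul]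
  calc Real.exp (-v) * (Real.exp ((j:ℝ) * -v) * (-v)^2)
      = Real.exp (-v + (j:ℝ) * -v) * v^2 := by rw [Real.exp_add]; ring
    _ = Real.exp (-(((j:ℝ)+1)*v)) * v^2 := by rw [show (-v) + (j:ℝ)*(-v) = -(((j:ℝ)+1)*v) by ring]

lemma expIoi (j : ℕ) : (IntegrableOn (fun v => Real.exp (-(((j:ℝ)+1)*v)) * v^2) (Ioi (0:ℝ))) ∧
    ∫ v in Ioi (0:ℝ), Real.exp (-(((j:ℝ)+1)*v)) * v^2 = 2/((j:ℝ)+1)^3 := by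
  set c : ℝ := (j:ℝ)+1 with hcdef
  have hc : (0:ℝ) < c := by positivity
  have hF : ∀ v ∈ Ioi (0:ℝ), HasDerivAt
      (fun v : ℝ => Real.exp (-(c*v)) * (-(v^2/c + (2/c^2)*v + 2/c^3)))
      (Real.exp (-(c*v)) * v^2) v := by
    intro v _
    have hexp : HasDerivAt (fun v : ℝ => Real.exp (-(c*v))) (Real.exp (-(c*v)) * (-c)) v := by
      have := (((hasDerivAt_id v).const_mul c).neg).exp
      simpa using this
    have hP : HasDerivAt (fun v : ℝ => -(v^2/c + (2/c^2)*v + 2/c^3))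
        (-((2*v)/c + 2/c^2)) v := by
      have := ((((hasDerivAt_pow 2 v).div_const c).add
        ((hasDerivAt_id v).const_mul (2/c^2))).add_const (2/c^3)).neg
      refine this.congr_deriv ?_
      simp
    have := hexp.mul hP
    refine this.congr_deriv ?_
    field_simp
    ring
  have htend : Tendsto (fun v : ℝ => Real.exp (-(c*v)) * (-(v^2/c + (2/c^2)*v + 2/c^3)))
      atTop (𝓝 0) := by
    have h0 := tendsto_aux c hc 0
    have h1 := tendsto_aux c hc 1
    have h2 := tendsto_aux c hc 2
    have := ((h2.const_mul (-(1/c))).add (h1.const_mul (-(2/c^2)))).add (h0.const_mul (-(2/c^3)))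
    simp only [mul_zero, add_zero, zero_add] at this
    refine this.congr (fun v => ?_)
    ring
  have hcont : ContinuousWithinAt
      (fun v : ℝ => Real.exp (-(c*v)) * (-(v^2/c + (2/c^2)*v + 2/c^3))) (Ici 0) 0 := by
    apply Continuous.continuousWithinAt
    fun_prop
  constructor
  · exact integrableOn_Ioi_deriv_of_nonneg hcont hF (fun v _ => by positivity) htend
  · rw [integral_Ioi_of_hasDerivAt_of_nonneg hcont hF (fun v _ => by positivity) htend]
    simp only [mul_zero, neg_zero, Real.exp_zero]
    norm_num

lemma intBexp (j : ℕ) : (IntegrableOn (fun u => u^j * (Real.log u)^2) (Ioo (0:ℝ) 1)) ∧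
    ∫ u in Ioo (0:ℝ) 1, u^j * (Real.log u)^2 = 2/((j:ℝ)+1)^3 :=
  ⟨(SB j).2.mpr (expIoi j).1, by rw [(SB j).1, (expIoi j).2]⟩

lemma contOn_log {s : Set ℝ} (h : ∀ x ∈ s, x ≠ 0) : ContinuousOn Real.log s :=
  Real.continuousOn_log.mono (fun x hx => h x hx)

lemma A5 : IntegrableOn (fun u => (Real.log u)^2/(1-u)) (Ioo (0:ℝ) 1) ∧
    ∫ u in Ioo (0:ℝ) 1, (Real.log u)^2/(1-u) = 2 * zetaVal 3 := by
  have h := sumLemma (s := Ioo (0:ℝ) 1) measurableSet_Ioo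
    (f := fun k u => u^k * (Real.log u)^2) (g := fun u => (Real.log u)^2/(1-u))
    (r := fun k => 2*(1/((k:ℝ)+1)^3)) ?_ ?_ ?_ ?_ ?_ ?_ ?_
  · refine ⟨h.1, ?_⟩
    rw [h.2, tsum_mul_left]
    rfl
  · refine ContinuousOn.aestronglyMeasurable ?_ measurableSet_Ioo
    refine ContinuousOn.div ((contOn_log (fun x hx => ne_of_gt hx.1)).pow 2)
      (Continuous.continuousOn (by fun_prop)) (fun x hx => by nlinarith [hx.2])
  · intro k
    refine ContinuousOn.aestronglyMeasurable ?_ measurableSet_Ioo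
    exact (continuous_pow k).continuousOn.mul ((contOn_log (fun x hx => ne_of_gt hx.1)).pow 2)
  · intro k x hx
    exact mul_nonneg (pow_nonneg hx.1.le _) (sq_nonneg _)
  · intro u hu
    have := (hasSum_geometric_of_lt_one hu.1.le hu.2).mul_right ((Real.log u)^2)
    convert this using 1
    · rfl
    simp only [div_eq_mul_inv]
    ring
  · exact fun k => (intBexp k).1
  · intro k
    rw [(intBexp k).2]
    ring
  · exact (summable_zterm (by norm_num)).mul_left 2

lemma odd_cube : ∑' n : ℕ, (1:ℝ)/(2*(n:ℝ)+1)^3 = (7/8) * zetaVal 3 := by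
  have hz := summable_zterm (p := 3) (by norm_num)
  have he : Summable (fun n : ℕ => (1:ℝ)/(2*(n:ℝ)+1)^3) := by
    refine Summable.of_nonneg_of_le (fun n => by positivity) (fun n => ?_) hz
    apply div_le_div_of_nonneg_left (by norm_num) (by positivity)
    apply pow_le_pow_left₀ (by positivity)
    linarith [Nat.cast_nonneg (α := ℝ) n]
  have hoeq : (fun n : ℕ => (1:ℝ)/(2*(n:ℝ)+2)^3) = fun n : ℕ => (1/8)*(1/((n:ℝ)+1)^3) := by
    funext n
    have : (0:ℝ) < (n:ℝ)+1 := by positivity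
    field_simp
    ring
  have ho : Summable (fun n : ℕ => (1:ℝ)/(2*(n:ℝ)+2)^3) := by
    rw [hoeq]; exact hz.mul_left _
  have key := tsum_even_add_odd (f := fun k : ℕ => (1:ℝ)/((k:ℝ)+1)^3)
    (by convert he using 2 with n; push_cast; ring_nf)
    (by convert ho using 2 with n; push_cast; ring_nf)
  have h1 : ∑' (n : ℕ), (1:ℝ)/(((2*n : ℕ):ℝ)+1)^3 = ∑' n : ℕ, (1:ℝ)/(2*(n:ℝ)+1)^3 := by
    congr 1; funext n; push_cast; ring_nf
  have h2 : ∑' (n : ℕ), (1:ℝ)/(((2*n+1 : ℕ):ℝ)+1)^3 = (1/8) * zetaVal 3 := by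
    rw [show (fun n : ℕ => (1:ℝ)/(((2*n+1 : ℕ):ℝ)+1)^3) = fun n : ℕ => (1/8)*(1/((n:ℝ)+1)^3) by
      funext n; push_cast; rw [show 2*(n:ℝ)+1+1 = 2*((n:ℝ)+1) by ring]; field_simp; ring]
    rw [tsum_mul_left]
    rfl
  have : ∑' n : ℕ, (1:ℝ)/(2*(n:ℝ)+1)^3 + (1/8) * zetaVal 3 = zetaVal 3 := by
    rw [← h1, ← h2]
    exact key
  linarith

lemma A6 : IntegrableOn (fun w => 2*(Real.log w)^2/(1-w^2)) (Ioo (0:ℝ) 1) ∧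
    ∫ w in Ioo (0:ℝ) 1, 2*(Real.log w)^2/(1-w^2) = (7/2) * zetaVal 3 := by
  have h := sumLemma (s := Ioo (0:ℝ) 1) measurableSet_Ioo
    (f := fun n w => 2*(w^(2*n) * (Real.log w)^2)) (g := fun w => 2*(Real.log w)^2/(1-w^2))
    (r := fun n => 4*((1:ℝ)/(2*(n:ℝ)+1)^3)) ?_ ?_ ?_ ?_ ?_ ?_ ?_
  · refine ⟨h.1, ?_⟩
    rw [h.2, tsum_mul_left, odd_cube]
    ring
  · refine ContinuousOn.aestronglyMeasurable ?_ measurableSet_Ioo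
    exact ContinuousOn.div
      (continuousOn_const.mul ((contOn_log (fun x hx => ne_of_gt hx.1)).pow 2))
      (Continuous.continuousOn (by fun_prop)) (fun x hx => by nlinarith [hx.1, hx.2])
  · intro n
    refine ContinuousOn.aestronglyMeasurable ?_ measurableSet_Ioo
    exact (Continuous.continuousOn (by fun_prop : Continuous fun w:ℝ => (2:ℝ)*w^(2*n))).mul
      ((contOn_log (fun x hx => ne_of_gt hx.1)).pow 2) |>.congr (fun x _ => by simp only [Pi.mul_apply, Pi.pow_apply]; ring)
  · intro n x hx
    have := mul_nonneg (pow_nonneg hx.1.le (2*n)) (sq_nonneg (Real.log x))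
    linarith
  · intro w hw
    have hw2 : w^2 < 1 := by nlinarith [hw.1, hw.2]
    have := ((hasSum_geometric_of_lt_one (sq_nonneg w) hw2).mul_right
      ((Real.log w)^2)).mul_left 2
    have heq : (fun n : ℕ => 2*(w^(2*n) * (Real.log w)^2))
        = fun n : ℕ => 2*((w^2)^n * (Real.log w)^2) := by
      funext n; rw [pow_mul]
    rw [heq]
    convert this using 1
    · rfl
    simp only [div_eq_mul_inv]; ring
  · intro n
    exact ((intBexp (2*n)).1.const_mul 2)
  · intro n
    rw [show (fun w : ℝ => 2*(w^(2*n) * (Real.log w)^2)) = fun w : ℝ => (2:ℝ) • (w^(2*n) * (Real.log w)^2) by funext w; simp [smul_eq_mul]]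
    rw [integral_smul, (intBexp (2*n)).2, smul_eq_mul]
    push_cast
    ring
  · refine Summable.of_nonneg_of_le (fun n => by positivity) (fun n => ?_)
      ((summable_zterm (p := 3) (by norm_num)).mul_left 4)
    apply mul_le_mul_of_nonneg_left ?_ (by norm_num)
    apply div_le_div_of_nonneg_left (by norm_num) (by positivity)
    apply pow_le_pow_left₀ (by positivity)
    linarith [Nat.cast_nonneg (α := ℝ) n]

lemma A4 : IntegrableOn (fun t => (-Real.log (1-t))/t) (Ioo (0:ℝ) 1) ∧
    ∫ t in Ioo (0:ℝ) 1, (-Real.log (1-t))/t = zetaVal 2 := by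
  have h := sumLemma (s := Ioo (0:ℝ) 1) measurableSet_Ioo
    (f := fun k t => t^k/((k:ℝ)+1)) (g := fun t => (-Real.log (1-t))/t)
    (r := fun k => 1/((k:ℝ)+1)^2) ?_ ?_ ?_ ?_ ?_ ?_ ?_
  · exact ⟨h.1, by rw [h.2]; rfl⟩
  · refine ContinuousOn.aestronglyMeasurable ?_ measurableSet_Ioo
    refine ContinuousOn.div ?_ continuousOn_id (fun x hx => ne_of_gt hx.1)
    refine ContinuousOn.neg (Real.continuousOn_log.comp
      (Continuous.continuousOn (by fun_prop)) ?_)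
    intro x hx
    simp only [mem_compl_iff, mem_singleton_iff]
    intro hc
    have := hx.2
    rw [sub_eq_zero] at hc
    linarith [hx.2, hc.symm]
  · intro k
    exact (Continuous.continuousOn (by fun_prop)).aestronglyMeasurable measurableSet_Ioo
  · intro k x hx
    exact div_nonneg (pow_nonneg hx.1.le k) (by positivity)
  · intro t ht
    obtain ⟨h0, h1⟩ := ht
    have habs : |t| < 1 := by rw [abs_of_pos h0]; exact h1
    have hh := (Real.hasSum_pow_div_log_of_abs_lt_one habs).div_const t
    have hne : t ≠ 0 := ne_of_gt h0
    convert hh using 2 with k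
    · rfl
    push_cast
    field_simp
    ring
  · intro k
    have hc : Continuous (fun t : ℝ => t^k/((k:ℝ)+1)) := by fun_prop
    exact (hc.continuousOn.integrableOn_Icc).mono_set Ioo_subset_Icc_self
  · intro k
    rw [show (fun t : ℝ => t^k/((k:ℝ)+1)) = fun t : ℝ => ((k:ℝ)+1)⁻¹ • t^k by
      funext t; simp [smul_eq_mul, div_eq_mul_inv, mul_comm]]
    rw [integral_smul, intB0 k, smul_eq_mul]
    have : (0:ℝ) < (k:ℝ)+1 := by positivity
    field_simp
  · exact summable_zterm (by norm_num)

-- derived Ioo 0 1 integrals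
lemma valA : IntegrableOn (fun t => (Real.log (1-t))^2/t) (Ioo (0:ℝ) 1) ∧
    ∫ t in Ioo (0:ℝ) 1, (Real.log (1-t))^2/t = 2 * zetaVal 3 :=
  ⟨SA.2.mp A5.1, by rw [← SA.1, A5.2]⟩

lemma valG : IntegrableOn (fun t => (Real.log (1-t^2))^2/t) (Ioo (0:ℝ) 1) ∧
    ∫ t in Ioo (0:ℝ) 1, (Real.log (1-t^2))^2/t = zetaVal 3 := by
  have h2 : IntegrableOn (fun t => 2*((Real.log (1-t^2))^2/t)) (Ioo (0:ℝ) 1) :=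
    SD2.2.mp valA.1
  have heq : (fun t : ℝ => (Real.log (1-t^2))^2/t)
      = fun t => (1/2)*(2*((Real.log (1-t^2))^2/t)) := by funext t; ring
  constructor
  · rw [heq]; exact h2.const_mul (1/2)
  · have hv : ∫ t in Ioo (0:ℝ) 1, 2*((Real.log (1-t^2))^2/t) = 2*zetaVal 3 := by
      rw [← SD2.1, valA.2]
    calc ∫ t in Ioo (0:ℝ) 1, (Real.log (1-t^2))^2/t
        = ∫ t in Ioo (0:ℝ) 1, (1/2)*(2*((Real.log (1-t^2))^2/t)) := by rw [← heq]
      _ = (1/2) * ∫ t in Ioo (0:ℝ) 1, 2*((Real.log (1-t^2))^2/t) := MeasureTheory.integral_const_mul _ _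
      _ = zetaVal 3 := by rw [hv]; ring

lemma valD : IntegrableOn (fun t => (Real.log ((1-t)/(1+t)))^2/t) (Ioo (0:ℝ) 1) ∧
    ∫ t in Ioo (0:ℝ) 1, (Real.log ((1-t)/(1+t)))^2/t = (7/2) * zetaVal 3 :=
  ⟨SE.2.mp A6.1, by rw [← SE.1, A6.2]⟩

lemma valM : IntegrableOn (fun t => (-Real.log (1-t^2))/t) (Ioo (0:ℝ) 1) ∧
    ∫ t in Ioo (0:ℝ) 1, (-Real.log (1-t^2))/t = (1/2) * zetaVal 2 := by
  have h2 : IntegrableOn (fun t => 2*((-Real.log (1-t^2))/t)) (Ioo (0:ℝ) 1) :=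
    SD1.2.mp A4.1
  have heq : (fun t : ℝ => (-Real.log (1-t^2))/t)
      = fun t => (1/2)*(2*((-Real.log (1-t^2))/t)) := by funext t; ring
  constructor
  · rw [heq]; exact h2.const_mul (1/2)
  · have hv : ∫ t in Ioo (0:ℝ) 1, 2*((-Real.log (1-t^2))/t) = zetaVal 2 := by
      rw [← SD1.1, A4.2]
    calc ∫ t in Ioo (0:ℝ) 1, (-Real.log (1-t^2))/t
        = ∫ t in Ioo (0:ℝ) 1, (1/2)*(2*((-Real.log (1-t^2))/t)) := by rw [← heq]
      _ = (1/2) * ∫ t in Ioo (0:ℝ) 1, 2*((-Real.log (1-t^2))/t) := MeasureTheory.integral_const_mul _ _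
      _ = (1/2) * zetaVal 2 := by rw [hv]

lemma J1 : ∫ t in Ioo (0:ℝ) 1, Real.log (1+t)/t = (1/2) * zetaVal 2 := by
  have hpoint : EqOn (fun t : ℝ => Real.log (1+t)/t)
      (fun t => (-Real.log (1-t))/t - (-Real.log (1-t^2))/t) (Ioo (0:ℝ) 1) := by
    intro t ht
    obtain ⟨h0, h1⟩ := ht
    have e1 : Real.log (1-t^2) = Real.log (1-t) + Real.log (1+t) := by
      rw [show (1:ℝ)-t^2 = (1-t)*(1+t) by ring,
        Real.log_mul (by linarith) (by linarith)]
    dsimp only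
    rw [e1]
    field_simp
    ring
  rw [setIntegral_congr_fun measurableSet_Ioo hpoint,
    integral_sub A4.1 valM.1, A4.2, valM.2]
  ring

lemma J2 : ∫ t in Ioo (0:ℝ) 1, (Real.log (1+t))^2/t = (1/4) * zetaVal 3 := by
  have hpoint : EqOn (fun t : ℝ => (Real.log (1+t))^2/t)
      (fun t => (1/2)*((Real.log (1-t^2))^2/t) - (Real.log (1-t))^2/t
        + (1/2)*((Real.log ((1-t)/(1+t)))^2/t)) (Ioo (0:ℝ) 1) := by
    intro t ht
    obtain ⟨h0, h1⟩ := ht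
    have e1 : Real.log (1-t^2) = Real.log (1-t) + Real.log (1+t) := by
      rw [show (1:ℝ)-t^2 = (1-t)*(1+t) by ring,
        Real.log_mul (by linarith) (by linarith)]
    have e2 : Real.log ((1-t)/(1+t)) = Real.log (1-t) - Real.log (1+t) :=
      Real.log_div (by linarith) (by linarith)
    dsimp only
    rw [e1, e2]
    field_simp
    ring
  rw [setIntegral_congr_fun measurableSet_Ioo hpoint]
  have e0 : ∫ t in Ioo (0:ℝ) 1, ((1/2)*((Real.log (1-t^2))^2/t) - (Real.log (1-t))^2/t
        + (1/2)*((Real.log ((1-t)/(1+t)))^2/t))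
      = (∫ t in Ioo (0:ℝ) 1, ((1/2)*((Real.log (1-t^2))^2/t) - (Real.log (1-t))^2/t))
        + ∫ t in Ioo (0:ℝ) 1, (1/2)*((Real.log ((1-t)/(1+t)))^2/t) :=
    integral_add ((valG.1.const_mul (1/2)).sub valA.1) (valD.1.const_mul (1/2))
  have e1 : ∫ t in Ioo (0:ℝ) 1, ((1/2)*((Real.log (1-t^2))^2/t) - (Real.log (1-t))^2/t)
      = (∫ t in Ioo (0:ℝ) 1, (1/2)*((Real.log (1-t^2))^2/t))
        - ∫ t in Ioo (0:ℝ) 1, (Real.log (1-t))^2/t :=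
    integral_sub (valG.1.const_mul (1/2)) valA.1
  rw [e0, e1, MeasureTheory.integral_const_mul, MeasureTheory.integral_const_mul,
    valG.2, valA.2, valD.2]
  ring

lemma summable_q (p : ℕ) : Summable (fun k : ℕ => (1/2:ℝ)^(k+1)/((k:ℝ)+1)^p) :=
  summable_qterm p

lemma contIccHalf {j : ℕ} (k : ℕ) :
    IntegrableOn (fun x : ℝ => x^k * (Real.log x)^j) (Ioo (1/2:ℝ) 1) := by
  have hc : ContinuousOn (fun x : ℝ => x^k * (Real.log x)^j) (Icc (1/2:ℝ) 1) := by
    refine (continuous_pow k).continuousOn.mul ((contOn_log ?_).pow j)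
    intro x hx
    have := hx.1
    intro h; rw [h] at this; norm_num at this
  exact (hc.integrableOn_Icc).mono_set Ioo_subset_Icc_self

lemma gmeasHalf (j : ℕ) :
    AEStronglyMeasurable (fun x : ℝ => (Real.log x)^j/(1-x))
      (volume.restrict (Ioo (1/2:ℝ) 1)) := by
  refine ContinuousOn.aestronglyMeasurable ?_ measurableSet_Ioo
  refine ContinuousOn.div ((contOn_log (fun x hx => by
    have := hx.1; intro h; rw [h] at this; norm_num at this)).pow j)
    (Continuous.continuousOn (by fun_prop)) (fun x hx => by
      have := hx.2; intro h; rw [sub_eq_zero] at h; linarith [h.symm])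
  
lemma hsumHalf (j : ℕ) : ∀ x ∈ Ioo (1/2:ℝ) 1,
    HasSum (fun k : ℕ => x^k * (Real.log x)^j) ((Real.log x)^j/(1-x)) := by
  intro x hx
  have h0 : (0:ℝ) < x := by linarith [hx.1]
  have := (hasSum_geometric_of_lt_one h0.le hx.2).mul_right ((Real.log x)^j)
  convert this using 1
  · rfl
  simp only [div_eq_mul_inv]
  ring

lemma A1val : IntegrableOn (fun x : ℝ => (Real.log x)^4/(1-x)) (Ioo (1/2:ℝ) 1) ∧
    ∫ x in Ioo (1/2:ℝ) 1, (Real.log x)^4/(1-x) =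
      24*zetaVal 5 - ((Real.log 2)^4*polylog 1 (1/2) + 4*(Real.log 2)^3*polylog 2 (1/2)
        + 12*(Real.log 2)^2*polylog 3 (1/2) + 24*Real.log 2*polylog 4 (1/2)
        + 24*polylog 5 (1/2)) := by
  have h := sumLemma (s := Ioo (1/2:ℝ) 1) measurableSet_Ioo
    (f := fun k x => x^k * (Real.log x)^4) (g := fun x => (Real.log x)^4/(1-x))
    (r := fun k => 24*(1/((k:ℝ)+1)^5)
      - ((Real.log 2)^4*((1/2:ℝ)^(k+1)/((k:ℝ)+1)^1)
        + 4*(Real.log 2)^3*((1/2:ℝ)^(k+1)/((k:ℝ)+1)^2)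
        + 12*(Real.log 2)^2*((1/2:ℝ)^(k+1)/((k:ℝ)+1)^3)
        + 24*Real.log 2*((1/2:ℝ)^(k+1)/((k:ℝ)+1)^4)
        + 24*((1/2:ℝ)^(k+1)/((k:ℝ)+1)^5)))
    (gmeasHalf 4) (fun k => (contIccHalf k).aestronglyMeasurable)
    (fun k x hx => mul_nonneg (pow_nonneg (by linarith [hx.1]) k)
      (by positivity)) (hsumHalf 4) (fun k => contIccHalf k) ?_ ?_
  · refine ⟨h.1, ?_⟩
    rw [h.2]
    have hS1 := (summable_q 1).mul_left ((Real.log 2)^4)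
    have hS2 := (summable_q 2).mul_left (4*(Real.log 2)^3)
    have hS3 := (summable_q 3).mul_left (12*(Real.log 2)^2)
    have hS4 := (summable_q 4).mul_left (24*Real.log 2)
    have hS5 := (summable_q 5).mul_left 24
    have hz := (summable_zterm (p := 5) (by norm_num)).mul_left 24
    rw [Summable.tsum_sub hz ((((hS1.add hS2).add hS3).add hS4).add hS5),
      Summable.tsum_add (((hS1.add hS2).add hS3).add hS4) hS5,
      Summable.tsum_add ((hS1.add hS2).add hS3) hS4,
      Summable.tsum_add (hS1.add hS2) hS3,
      Summable.tsum_add hS1 hS2,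
      tsum_mul_left, tsum_mul_left, tsum_mul_left, tsum_mul_left, tsum_mul_left,
      tsum_mul_left]
    rfl
  · intro k
    rw [intB4 k]
    have hm : (0:ℝ) < (k:ℝ)+1 := by positivity
    field_simp
  · have hS1 := (summable_q 1).mul_left ((Real.log 2)^4)
    have hS2 := (summable_q 2).mul_left (4*(Real.log 2)^3)
    have hS3 := (summable_q 3).mul_left (12*(Real.log 2)^2)
    have hS4 := (summable_q 4).mul_left (24*Real.log 2)
    have hS5 := (summable_q 5).mul_left 24
    have hz := (summable_zterm (p := 5) (by norm_num)).mul_left 24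
    exact hz.sub ((((hS1.add hS2).add hS3).add hS4).add hS5)

lemma A2val : IntegrableOn (fun x : ℝ => (-Real.log x)/(1-x)) (Ioo (1/2:ℝ) 1) ∧
    ∫ x in Ioo (1/2:ℝ) 1, (-Real.log x)/(1-x) =
      zetaVal 2 - (Real.log 2*polylog 1 (1/2) + polylog 2 (1/2)) := by
  have h := sumLemma (s := Ioo (1/2:ℝ) 1) measurableSet_Ioo
    (f := fun k x => x^k * (-Real.log x)) (g := fun x => (-Real.log x)/(1-x))
    (r := fun k => (1/((k:ℝ)+1)^2)
      - (Real.log 2*((1/2:ℝ)^(k+1)/((k:ℝ)+1)^1) + ((1/2:ℝ)^(k+1)/((k:ℝ)+1)^2)))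
    ?_ ?_ ?_ ?_ ?_ ?_ ?_
  · refine ⟨h.1, ?_⟩
    rw [h.2]
    have hS1 := (summable_q 1).mul_left (Real.log 2)
    have hS2 := summable_q 2
    have hz := summable_zterm (p := 2) (by norm_num)
    rw [Summable.tsum_sub hz (hS1.add hS2), Summable.tsum_add hS1 hS2, tsum_mul_left]
    rfl
  · refine ContinuousOn.aestronglyMeasurable ?_ measurableSet_Ioo
    refine ContinuousOn.div (ContinuousOn.neg (contOn_log (fun x hx => by
      have := hx.1; intro h; rw [h] at this; norm_num at this)))
      (Continuous.continuousOn (by fun_prop)) (fun x hx => by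
        have := hx.2; intro h; rw [sub_eq_zero] at h; linarith [h.symm])
  · intro k
    have hfeq : (fun x : ℝ => x^k * (-Real.log x)) = fun x => -(x^k*(Real.log x)^1) := by
      funext x; ring
    show AEStronglyMeasurable (fun x : ℝ => x^k * (-Real.log x)) _
    rw [hfeq]
    exact ((contIccHalf (j := 1) k).neg).aestronglyMeasurable
  · intro k x hx
    have hl : Real.log x ≤ 0 := Real.log_nonpos (by linarith [hx.1]) hx.2.le
    exact mul_nonneg (pow_nonneg (by linarith [hx.1] : (0:ℝ) ≤ x) k) (by linarith)
  · intro x hx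
    have h0 : (0:ℝ) < x := by linarith [hx.1]
    have := (hasSum_geometric_of_lt_one h0.le hx.2).mul_right (-Real.log x)
    convert this using 1
    · rfl
    simp only [div_eq_mul_inv]
    ring
  · intro k
    have hfeq : (fun x : ℝ => x^k * (-Real.log x)) = fun x => -(x^k*(Real.log x)^1) := by
      funext x; ring
    show IntegrableOn (fun x : ℝ => x^k * (-Real.log x)) _ _
    rw [hfeq]
    exact (contIccHalf (j := 1) k).neg
  · intro k
    rw [intB1 k]
    have hm : (0:ℝ) < (k:ℝ)+1 := by positivity
    field_simp
  · have hS1 := (summable_q 1).mul_left (Real.log 2)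
    have hS2 := summable_q 2
    have hz := summable_zterm (p := 2) (by norm_num)
    exact hz.sub (hS1.add hS2)

lemma A3val : IntegrableOn (fun x : ℝ => (Real.log x)^2/(1-x)) (Ioo (1/2:ℝ) 1) ∧
    ∫ x in Ioo (1/2:ℝ) 1, (Real.log x)^2/(1-x) =
      2*zetaVal 3 - ((Real.log 2)^2*polylog 1 (1/2) + 2*Real.log 2*polylog 2 (1/2)
        + 2*polylog 3 (1/2)) := by
  have h := sumLemma (s := Ioo (1/2:ℝ) 1) measurableSet_Ioo
    (f := fun k x => x^k * (Real.log x)^2) (g := fun x => (Real.log x)^2/(1-x))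
    (r := fun k => 2*(1/((k:ℝ)+1)^3)
      - ((Real.log 2)^2*((1/2:ℝ)^(k+1)/((k:ℝ)+1)^1)
        + 2*Real.log 2*((1/2:ℝ)^(k+1)/((k:ℝ)+1)^2)
        + 2*((1/2:ℝ)^(k+1)/((k:ℝ)+1)^3)))
    (gmeasHalf 2) (fun k => (contIccHalf k).aestronglyMeasurable)
    (fun k x hx => mul_nonneg (pow_nonneg (by linarith [hx.1]) k) (sq_nonneg _))
    (hsumHalf 2) (fun k => contIccHalf k) ?_ ?_
  · refine ⟨h.1, ?_⟩
    rw [h.2]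
    have hS1 := (summable_q 1).mul_left ((Real.log 2)^2)
    have hS2 := (summable_q 2).mul_left (2*Real.log 2)
    have hS3 := (summable_q 3).mul_left 2
    have hz := (summable_zterm (p := 3) (by norm_num)).mul_left 2
    rw [Summable.tsum_sub hz ((hS1.add hS2).add hS3), Summable.tsum_add (hS1.add hS2) hS3,
      Summable.tsum_add hS1 hS2, tsum_mul_left, tsum_mul_left, tsum_mul_left, tsum_mul_left]
    rfl
  · intro k
    rw [intB2 k]
    have hm : (0:ℝ) < (k:ℝ)+1 := by positivity
    field_simp
  · have hS1 := (summable_q 1).mul_left ((Real.log 2)^2)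
    have hS2 := (summable_q 2).mul_left (2*Real.log 2)
    have hS3 := (summable_q 3).mul_left 2
    have hz := (summable_zterm (p := 3) (by norm_num)).mul_left 2
    exact hz.sub ((hS1.add hS2).add hS3)

lemma intCneg : IntegrableOn (fun x : ℝ => (-Real.log x)/x) (Ioo (1/2:ℝ) 1) ∧
    ∫ x in Ioo (1/2:ℝ) 1, (-Real.log x)/x = (Real.log 2)^2/2 := by
  have heq : (fun x : ℝ => (-Real.log x)/x) = fun x => -((Real.log x)^1/x) := by
    funext x; ring
  have hc : ∀ j : ℕ, IntegrableOn (fun x : ℝ => (Real.log x)^j/x) (Ioo (1/2:ℝ) 1) := by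
    intro j
    have hcont : ContinuousOn (fun x : ℝ => (Real.log x)^j/x) (Icc (1/2:ℝ) 1) := by
      have hne : ∀ x ∈ Icc (1/2:ℝ) 1, x ≠ 0 := fun x hx => by
        have := hx.1; intro h; rw [h] at this; norm_num at this
      exact ((contOn_log hne).pow j).div continuousOn_id hne
    exact hcont.integrableOn_Icc.mono_set Ioo_subset_Icc_self
  constructor
  · rw [heq]; exact (hc 1).neg
  · rw [heq, integral_neg, intC 1 (by norm_num)]
    ring

lemma intCIoo (j : ℕ) (hj : j ≠ 0) : IntegrableOn (fun x : ℝ => (Real.log x)^j/x) (Ioo (1/2:ℝ) 1) := by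
  have hcont : ContinuousOn (fun x : ℝ => (Real.log x)^j/x) (Icc (1/2:ℝ) 1) := by
    have hne : ∀ x ∈ Icc (1/2:ℝ) 1, x ≠ 0 := fun x hx => by
      have := hx.1; intro h; rw [h] at this; norm_num at this
    exact ((contOn_log hne).pow j).div continuousOn_id hne
  exact hcont.integrableOn_Icc.mono_set Ioo_subset_Icc_self

lemma K1 : ∫ x in Ioo (1/2:ℝ) 1, (-Real.log x)/(x*(1-x)) =
    (Real.log 2)^2/2 + (zetaVal 2 - (Real.log 2*polylog 1 (1/2) + polylog 2 (1/2))) := by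
  have hpoint : EqOn (fun x : ℝ => (-Real.log x)/(x*(1-x)))
      (fun x => (-Real.log x)/x + (-Real.log x)/(1-x)) (Ioo (1/2:ℝ) 1) := by
    intro x hx
    have h0 : (0:ℝ) < x := by linarith [hx.1]
    have h1 : (0:ℝ) < 1 - x := by linarith [hx.2]
    dsimp only
    field_simp
    ring
  rw [setIntegral_congr_fun measurableSet_Ioo hpoint,
    integral_add intCneg.1 A2val.1, intCneg.2, A2val.2]

lemma K2 : ∫ x in Ioo (1/2:ℝ) 1, (Real.log x)^2/(x*(1-x)) =
    (Real.log 2)^3/3 + (2*zetaVal 3 - ((Real.log 2)^2*polylog 1 (1/2)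
      + 2*Real.log 2*polylog 2 (1/2) + 2*polylog 3 (1/2))) := by
  have hpoint : EqOn (fun x : ℝ => (Real.log x)^2/(x*(1-x)))
      (fun x => (Real.log x)^2/x + (Real.log x)^2/(1-x)) (Ioo (1/2:ℝ) 1) := by
    intro x hx
    have h0 : (0:ℝ) < x := by linarith [hx.1]
    have h1 : (0:ℝ) < 1 - x := by linarith [hx.2]
    dsimp only
    field_simp
    ring
  rw [setIntegral_congr_fun measurableSet_Ioo hpoint,
    integral_add (intCIoo 2 (by norm_num)) A3val.1, intC 2 (by norm_num), A3val.2]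
  ring

lemma K4 : ∫ x in Ioo (1/2:ℝ) 1, (Real.log x)^4/(x*(1-x)) =
    (Real.log 2)^5/5 + (24*zetaVal 5 - ((Real.log 2)^4*polylog 1 (1/2)
      + 4*(Real.log 2)^3*polylog 2 (1/2) + 12*(Real.log 2)^2*polylog 3 (1/2)
      + 24*Real.log 2*polylog 4 (1/2) + 24*polylog 5 (1/2))) := by
  have hpoint : EqOn (fun x : ℝ => (Real.log x)^4/(x*(1-x)))
      (fun x => (Real.log x)^4/x + (Real.log x)^4/(1-x)) (Ioo (1/2:ℝ) 1) := by
    intro x hx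
    have h0 : (0:ℝ) < x := by linarith [hx.1]
    have h1 : (0:ℝ) < 1 - x := by linarith [hx.2]
    dsimp only
    field_simp
    ring
  rw [setIntegral_congr_fun measurableSet_Ioo hpoint,
    integral_add (intCIoo 4 (by norm_num)) A1val.1, intC 4 (by norm_num), A1val.2]
  ring

lemma zeta2 : zetaVal 2 = π^2/6 := by
  have h := hasSum_zeta_two
  have ht := h.tsum_eq
  rw [Summable.tsum_eq_zero_add h.summable] at ht
  unfold zetaVal
  rw [show (fun k : ℕ => 1/((k:ℝ)+1)^2) = fun n : ℕ => 1/((n+1:ℕ):ℝ)^2 by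
    funext n; push_cast; ring]
  simp only [Nat.cast_zero] at ht
  norm_num at ht
  rw [← ht]
  congr 1
  funext n
  push_cast
  rw [one_div]

lemma polylog_one : polylog 1 (1/2) = Real.log 2 := by
  have h := Real.hasSum_pow_div_log_of_abs_lt_one
    (x := (1/2:ℝ)) (by rw [abs_of_pos (by norm_num)]; norm_num)
  have ht := h.tsum_eq
  unfold polylog
  rw [show (fun k : ℕ => (1/2:ℝ)^(k+1)/((k:ℝ)+1)^1) = fun n : ℕ => (1/2:ℝ)^(n+1)/((n:ℝ)+1) by
    funext n; rw [pow_one]]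
  rw [show (1:ℝ) - 1/2 = 1/2 by norm_num] at ht
  rw [show Real.log (1/2) = -Real.log 2 by rw [one_div, Real.log_inv]] at ht
  simpa using ht

theorem stmt8 : ∫ u in Set.Ioi (0:ℝ), (Real.log (1 + Real.exp (-u)))^4 = (2/3) * π^2 * (Real.log 2)^3 - (21/2) * (Real.log 2)^2 * zetaVal 3 - 24 * Real.log 2 * polylog 4 (1/2) - (4/5) * (Real.log 2)^5 - 24 * polylog 5 (1/2) + 24 * zetaVal 5 := by
  have hI : ∫ u in Set.Ioi (0:ℝ), (Real.log (1 + Real.exp (-u)))^4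
      = ∫ x in Ioo (1/2:ℝ) 1, (Real.log x)^4/(x*(1-x)) := SI.1.symm
  have E1 : (Real.log 2)^2/2 + (zetaVal 2 - (Real.log 2*polylog 1 (1/2) + polylog 2 (1/2)))
      = (1/2)*zetaVal 2 := by rw [← K1, SJ1.1, J1]
  have E2 : (Real.log 2)^3/3 + (2*zetaVal 3 - ((Real.log 2)^2*polylog 1 (1/2)
      + 2*Real.log 2*polylog 2 (1/2) + 2*polylog 3 (1/2))) = (1/4)*zetaVal 3 := by
    rw [← K2, SJ2.1, J2]
  have hP1 := polylog_one
  have hz2 := zeta2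
  have hP2 : polylog 2 (1/2) = π^2/12 - (Real.log 2)^2/2 := by
    rw [hP1, hz2] at E1
    nlinarith [E1]
  have hP3 : polylog 3 (1/2) = 7/8*zetaVal 3 - π^2*Real.log 2/12 + (Real.log 2)^3/6 := by
    rw [hP1, hP2] at E2
    nlinarith [E2]
  rw [hI, K4, hP1, hP2, hP3]
  ring
end

section
/- The alternating Euler sum Σ_{k≥1} (−1)^{k−1} H_k/k² equals (5/8)ζ(3), where H_k = Σ_{j=1}^k 1/j. -/
open MeasureTheory Real

namespace Stmt10

noncomputable def g (p : ℕ × ℕ) : ℝ :=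
  1 / (((p.1 : ℝ) + 1) * ((p.2 : ℝ) + 1) * ((p.1 : ℝ) + (p.2 : ℝ) + 2))

lemma g_nonneg (p : ℕ × ℕ) : 0 ≤ g p := by
  unfold g; positivity

lemma g_swap (a b : ℕ) : g (a, b) = g (b, a) := by
  simp only [g]; ring_nf

lemma harm_one (k : ℕ) : harm 1 (k + 1) = harm 1 k + 1 / ((k : ℝ) + 1) := by
  simp [harm, Finset.sum_range_succ]

lemma harm_nonneg (k : ℕ) : 0 ≤ harm 1 k := by
  apply Finset.sum_nonneg; intro j _; positivity

lemma harm_one_one : harm 1 1 = 1 := by simp [harm]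

lemma partial_sum (d N : ℕ) :
    ∑ i ∈ Finset.range N, (1 / ((i : ℝ) + 1) - 1 / ((i : ℝ) + 1 + d)) =
      harm 1 d - ∑ i ∈ Finset.range d, 1 / ((N : ℝ) + (i : ℝ) + 1) := by
  induction N with
  | zero =>
    simp only [Finset.range_zero, Finset.sum_empty, Nat.cast_zero]
    have : ∑ j ∈ Finset.range d, 1 / ((j : ℝ) + 1) ^ 1
        = ∑ x ∈ Finset.range d, 1 / ((0 : ℝ) + (x : ℝ) + 1) :=
      Finset.sum_congr rfl fun j _ => by push_cast; ring_nf
    rw [harm, this]; ring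
  | succ N ih =>
    rw [Finset.sum_range_succ, ih]
    have key : ∑ i ∈ Finset.range d,
        ((fun i : ℕ => 1 / ((N : ℝ) + (i : ℝ) + 1)) i -
          (fun i : ℕ => 1 / ((N : ℝ) + (i : ℝ) + 1)) (i + 1)) =
        1 / ((N : ℝ) + 1) - 1 / ((N : ℝ) + (d : ℝ) + 1) := by
      rw [Finset.sum_range_sub' (fun i : ℕ => 1 / ((N : ℝ) + (i : ℝ) + 1)) d]
      norm_num
    have expand : ∀ i : ℕ, ((fun i : ℕ => 1 / ((N : ℝ) + (i : ℝ) + 1)) i -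
          (fun i : ℕ => 1 / ((N : ℝ) + (i : ℝ) + 1)) (i + 1)) =
          1 / ((N : ℝ) + (i : ℝ) + 1) - 1 / (((N : ℝ) + 1) + (i : ℝ) + 1) := by
      intro i; push_cast; ring_nf
    rw [Finset.sum_congr rfl (fun i _ => expand i)] at key
    rw [Finset.sum_sub_distrib] at key
    push_cast
    rw [show (N:ℝ) + 1 + (d:ℝ) = (N:ℝ) + (d:ℝ) + 1 from by ring]
    linarith [key]

lemma telescope (d : ℕ) :
    HasSum (fun i : ℕ => 1 / ((i : ℝ) + 1) - 1 / ((i : ℝ) + 1 + d)) (harm 1 d) := by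
  have hnn : ∀ i : ℕ, 0 ≤ 1 / ((i : ℝ) + 1) - 1 / ((i : ℝ) + 1 + d) := by
    intro i
    have h1 : (0:ℝ) < (i : ℝ) + 1 := by positivity
    have h2 : ((i : ℝ) + 1) ≤ (i : ℝ) + 1 + d := by
      have : (0:ℝ) ≤ (d:ℝ) := Nat.cast_nonneg d
      linarith
    have := one_div_le_one_div_of_le h1 h2
    linarith
  rw [hasSum_iff_tendsto_nat_of_nonneg hnn]
  have heq : (fun N : ℕ => ∑ i ∈ Finset.range N,
      (1 / ((i : ℝ) + 1) - 1 / ((i : ℝ) + 1 + d))) =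
      fun N : ℕ => harm 1 d - ∑ i ∈ Finset.range d, 1 / ((N : ℝ) + (i : ℝ) + 1) := by
    funext N; exact partial_sum d N
  rw [heq]
  have : Filter.Tendsto (fun N : ℕ => ∑ i ∈ Finset.range d, 1 / ((N : ℝ) + (i : ℝ) + 1))
      Filter.atTop (nhds 0) := by
    have h0 : (0:ℝ) = ∑ i ∈ Finset.range d, (0:ℝ) := by simp
    rw [h0]
    apply tendsto_finset_sum
    intro i _
    have : Filter.Tendsto (fun x : ℝ => 1 / (x + ((i:ℝ) + 1))) Filter.atTop (nhds 0) := by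
      apply Filter.Tendsto.div_atTop tendsto_const_nhds
      exact Filter.tendsto_atTop_add_const_right _ _ Filter.tendsto_id
    have := this.comp tendsto_natCast_atTop_atTop (α := ℕ)
    simpa [Function.comp_def, add_assoc] using this
  simpa using (tendsto_const_nhds (x := harm 1 d)).sub this

lemma row (n : ℕ) :
    HasSum (fun i : ℕ => g (n, i)) (harm 1 (n + 1) / ((n : ℝ) + 1) ^ 2) := by
  have h := (telescope (n + 1)).div_const (((n : ℝ) + 1) ^ 2)
  apply HasSum.congr_fun h
  intro i
  show g (n, i) = _
  have hn : ((n:ℝ) + 1) ≠ 0 := by positivity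
  have hi : ((i:ℝ) + 1) ≠ 0 := by positivity
  have hni : ((n:ℝ) + (i:ℝ) + 2) ≠ 0 := by positivity
  simp only [g]
  push_cast
  field_simp
  ring

lemma summable_q : Summable (fun k : ℕ => 1 / (((k : ℝ) + 1) * Real.sqrt ((k : ℝ) + 1))) := by
  have h : Summable (fun n : ℕ => 1 / (n : ℝ) ^ (3/2 : ℝ)) :=
    Real.summable_one_div_nat_rpow.mpr (by norm_num)
  have h2 := h.comp_injective Nat.succ_injective
  apply h2.congr
  intro k
  show 1 / ((Nat.succ k : ℕ) : ℝ) ^ (3/2 : ℝ) = _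
  have hx : (0:ℝ) < (k : ℝ) + 1 := by positivity
  have : ((Nat.succ k : ℕ) : ℝ) = (k : ℝ) + 1 := by push_cast; ring
  rw [this, show (3/2 : ℝ) = 1 + 1/2 by norm_num, Real.rpow_add hx, Real.rpow_one,
    ← Real.sqrt_eq_rpow]

lemma summable_g : Summable g := by
  have hb : Summable (fun p : ℕ × ℕ =>
      (1 / (((p.1 : ℝ) + 1) * Real.sqrt ((p.1 : ℝ) + 1))) *
      (1 / (((p.2 : ℝ) + 1) * Real.sqrt ((p.2 : ℝ) + 1)))) :=
    summable_q.mul_of_nonneg summable_q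
      (fun k => by positivity) (fun k => by positivity)
  refine Summable.of_nonneg_of_le g_nonneg ?_ hb
  · intro p
    obtain ⟨i, n⟩ := p
    set a : ℝ := (i : ℝ) + 1 with ha
    set b : ℝ := (n : ℝ) + 1 with hb
    have hap : (0:ℝ) < a := by positivity
    have hbp : (0:ℝ) < b := by positivity
    have habs : Real.sqrt (a * b) ≤ a + b := by
      have h1 : a * b ≤ (a + b) ^ 2 := by nlinarith
      calc Real.sqrt (a * b) ≤ Real.sqrt ((a + b) ^ 2) := Real.sqrt_le_sqrt h1
        _ = a + b := Real.sqrt_sq (by linarith)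
    have hs : (0:ℝ) < Real.sqrt (a * b) := Real.sqrt_pos.mpr (by positivity)
    have key : 1 / (a * b * (a + b)) ≤ 1 / (a * b * Real.sqrt (a * b)) := by
      apply one_div_le_one_div_of_le (by positivity)
      have := mul_le_mul_of_nonneg_left habs (le_of_lt (mul_pos hap hbp))
      linarith
    have : g (i, n) = 1 / (a * b * (a + b)) := by
      simp only [g, ha, hb]; ring_nf
    rw [this]
    refine key.trans (le_of_eq ?_)
    rw [Real.sqrt_mul (le_of_lt hap)]
    field_simp

lemma summable_sign (c : ℕ × ℕ → ℕ) : Summable (fun p => (-1 : ℝ) ^ (c p) * g p) := by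
  rw [← summable_abs_iff]
  apply summable_g.congr
  intro p
  rw [abs_mul, abs_pow, abs_neg, abs_one, one_pow, one_mul, abs_of_nonneg (g_nonneg p)]

noncomputable def V : ℝ := ∑' p : ℕ × ℕ, g p
noncomputable def W : ℝ := ∑' p : ℕ × ℕ, (-1 : ℝ) ^ (p.1 + p.2) * g p
noncomputable def FL : ℝ := ∑' p : ℕ × ℕ, (-1 : ℝ) ^ p.1 * g p
noncomputable def S : ℝ := ∑' k : ℕ, (-1:ℝ)^k * harm 1 (k+1) / ((k:ℝ)+1)^2

lemma sumW : Summable (fun p : ℕ × ℕ => (-1 : ℝ) ^ (p.1 + p.2) * g p) := summable_sign _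
lemma sumFL : Summable (fun p : ℕ × ℕ => (-1 : ℝ) ^ p.1 * g p) := summable_sign _

lemma hV : V = ∑' n : ℕ, harm 1 (n+1) / ((n:ℝ)+1)^2 := by
  rw [V, Summable.tsum_prod summable_g]
  exact tsum_congr fun n => (row n).tsum_eq

lemma sumE : Summable (fun n : ℕ => harm 1 (n+1) / ((n:ℝ)+1)^2) := by
  apply (summable_g.prod).congr
  intro n
  exact (row n).tsum_eq

lemma hFL : FL = S := by
  rw [FL, S, Summable.tsum_prod sumFL]
  apply tsum_congr
  intro n
  rw [show (fun c : ℕ => (-1:ℝ) ^ (n, c).1 * g (n, c)) = fun c : ℕ => (-1:ℝ) ^ n * g (n, c)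
      from rfl, tsum_mul_left, (row n).tsum_eq, mul_div_assoc]

noncomputable def diagEquiv : (Σ s : ℕ, Fin (s+1)) ≃ ℕ × ℕ := by
  apply Equiv.ofBijective (fun x => (x.2.1, x.1 - x.2.1))
  constructor
  · rintro ⟨s, ⟨j, hj⟩⟩ ⟨t, ⟨k, hk⟩⟩ h
    simp only [Prod.mk.injEq] at h
    obtain ⟨h1, h2⟩ := h
    subst h1
    obtain rfl : s = t := by omega
    rfl
  · rintro ⟨a, b⟩
    exact ⟨⟨a + b, ⟨a, by omega⟩⟩, by simp⟩

lemma diag (h : ℕ × ℕ → ℝ) (hs : Summable h) :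
    ∑' p : ℕ × ℕ, h p = ∑' s : ℕ, ∑ j ∈ Finset.range (s+1), h (j, s - j) := by
  rw [← diagEquiv.tsum_eq h]
  rw [show (fun c => h (diagEquiv c)) = h ∘ ⇑diagEquiv from rfl,
    Summable.tsum_sigma (diagEquiv.summable_iff.mpr hs)]
  apply tsum_congr
  intro s
  rw [tsum_fintype]
  rw [← Fin.sum_univ_eq_sum_range (fun j => h (j, s - j)) (s+1)]
  rfl

lemma antidiag (s : ℕ) :
    ∑ j ∈ Finset.range (s+1), g (j, s - j) = 2 * harm 1 (s+1) / ((s:ℝ)+2)^2 := by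
  have step : ∀ j ∈ Finset.range (s+1), g (j, s - j) =
      (1/((s:ℝ)+2)^2) * (1/((j:ℝ)+1) + 1/(((s:ℝ) - (j:ℝ))+1)) := by
    intro j hj
    have hj' : j ≤ s := by simpa [Nat.lt_succ_iff] using hj
    have hcast : (((s - j : ℕ) : ℝ)) = (s:ℝ) - (j:ℝ) := by
      push_cast [hj']; ring
    have h1 : (0:ℝ) < (j:ℝ) + 1 := by positivity
    have h2 : (0:ℝ) < (s:ℝ) - (j:ℝ) + 1 := by
      have : (j:ℝ) ≤ (s:ℝ) := by exact_mod_cast hj'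
      linarith
    have h3 : (0:ℝ) < (s:ℝ) + 2 := by positivity
    simp only [g, hcast]
    rw [show (j:ℝ) + ((s:ℝ) - (j:ℝ)) + 2 = (s:ℝ) + 2 from by ring]
    field_simp
    ring
  rw [Finset.sum_congr rfl step, ← Finset.mul_sum, Finset.sum_add_distrib]
  have hA : ∑ j ∈ Finset.range (s+1), 1/((j:ℝ)+1) = harm 1 (s+1) := by
    rw [harm]
    exact Finset.sum_congr rfl fun j _ => by norm_num
  have hB : ∑ j ∈ Finset.range (s+1), 1/(((s:ℝ) - (j:ℝ))+1) = harm 1 (s+1) := by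
    have := Finset.sum_range_reflect (fun j : ℕ => 1/(((s:ℝ) - (j:ℝ))+1)) (s+1)
    rw [← this, harm]
    apply Finset.sum_congr rfl
    intro j hj
    have hj' : j ≤ s := by simpa [Nat.lt_succ_iff] using hj
    have h : ((s + 1 - 1 - j : ℕ) : ℝ) = (s:ℝ) - (j:ℝ) := by push_cast [hj']; ring_nf
    rw [h, show (s:ℝ) - ((s:ℝ) - (j:ℝ)) + 1 = (j:ℝ) + 1 from by ring]
    norm_num
  rw [hA, hB]
  ring

lemma antidiagW (s : ℕ) :
    ∑ j ∈ Finset.range (s+1), (-1:ℝ) ^ (j + (s - j)) * g (j, s - j) =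
      (-1:ℝ)^s * (2 * harm 1 (s+1) / ((s:ℝ)+2)^2) := by
  have step : ∀ j ∈ Finset.range (s+1), (-1:ℝ) ^ (j + (s - j)) * g (j, s - j) =
      (-1:ℝ)^s * g (j, s - j) := by
    intro j hj
    have hj' : j ≤ s := by simpa [Nat.lt_succ_iff] using hj
    rw [show j + (s - j) = s from by omega]
  rw [Finset.sum_congr rfl step, ← Finset.mul_sum, antidiag]

lemma hVdiag : V = ∑' s : ℕ, 2 * harm 1 (s+1) / ((s:ℝ)+2)^2 := by
  rw [V, diag g summable_g]
  exact tsum_congr fun s => antidiag s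

lemma hWdiag : W = ∑' s : ℕ, (-1:ℝ)^s * (2 * harm 1 (s+1) / ((s:ℝ)+2)^2) := by
  rw [W, diag _ sumW]
  exact tsum_congr fun s => antidiagW s

noncomputable def parEquiv : ((Fin 2 × Fin 2) × (ℕ × ℕ)) ≃ ℕ × ℕ := by
  apply Equiv.ofBijective (fun q => (2 * q.2.1 + q.1.1.1, 2 * q.2.2 + q.1.2.1))
  constructor
  · rintro ⟨⟨⟨a, ha⟩, ⟨b, hb⟩⟩, ⟨i, n⟩⟩ ⟨⟨⟨a', ha'⟩, ⟨b', hb'⟩⟩, ⟨i', n'⟩⟩ h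
    simp only [Prod.mk.injEq] at h ⊢
    refine ⟨⟨?_, ?_⟩, ?_, ?_⟩ <;> [skip; skip; omega; omega]
    · ext; simp; omega
    · ext; simp; omega
  · rintro ⟨m, n⟩
    exact ⟨⟨⟨⟨m % 2, by omega⟩, ⟨n % 2, by omega⟩⟩, ⟨m / 2, n / 2⟩⟩, by
      simp only [Prod.mk.injEq]; omega⟩

lemma parity (h : ℕ × ℕ → ℝ) (hs : Summable h) :
    ∑' p : ℕ × ℕ, h p =
      ∑' p : ℕ × ℕ, h (2*p.1, 2*p.2) + ∑' p : ℕ × ℕ, h (2*p.1, 2*p.2+1) +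
      ∑' p : ℕ × ℕ, h (2*p.1+1, 2*p.2) + ∑' p : ℕ × ℕ, h (2*p.1+1, 2*p.2+1) := by
  rw [← parEquiv.tsum_eq h]
  rw [show (fun c => h (parEquiv c)) = h ∘ ⇑parEquiv from rfl,
    Summable.tsum_prod (parEquiv.summable_iff.mpr hs), tsum_fintype]
  rw [Fintype.sum_prod_type, Fin.sum_univ_two]
  simp only [Fin.sum_univ_two]
  rw [tsum_congr (f := fun p : ℕ × ℕ => (h ∘ ⇑parEquiv) (((0:Fin 2), (0:Fin 2)), p))
      (g := fun p : ℕ × ℕ => h (2*p.1, 2*p.2)) (fun p => by simp [parEquiv]; rfl),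
    tsum_congr (f := fun p : ℕ × ℕ => (h ∘ ⇑parEquiv) (((0:Fin 2), (1:Fin 2)), p))
      (g := fun p : ℕ × ℕ => h (2*p.1, 2*p.2+1)) (fun p => by simp [parEquiv]; rfl),
    tsum_congr (f := fun p : ℕ × ℕ => (h ∘ ⇑parEquiv) (((1:Fin 2), (0:Fin 2)), p))
      (g := fun p : ℕ × ℕ => h (2*p.1+1, 2*p.2)) (fun p => by simp [parEquiv]; rfl),
    tsum_congr (f := fun p : ℕ × ℕ => (h ∘ ⇑parEquiv) (((1:Fin 2), (1:Fin 2)), p))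
      (g := fun p : ℕ × ℕ => h (2*p.1+1, 2*p.2+1)) (fun p => by simp [parEquiv]; rfl)]
  ring

noncomputable def A00 : ℝ := ∑' p : ℕ × ℕ, g (2*p.1, 2*p.2)
noncomputable def A01 : ℝ := ∑' p : ℕ × ℕ, g (2*p.1, 2*p.2+1)
noncomputable def A10 : ℝ := ∑' p : ℕ × ℕ, g (2*p.1+1, 2*p.2)
noncomputable def A11 : ℝ := ∑' p : ℕ × ℕ, g (2*p.1+1, 2*p.2+1)

lemma hVpar : V = A00 + A01 + A10 + A11 := parity g summable_g

lemma hWpar : W = A00 - A01 - A10 + A11 := by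
  rw [W, parity _ sumW]
  have h00 : ∀ p : ℕ × ℕ, (-1:ℝ) ^ ((2*p.1) + (2*p.2)) * g (2*p.1, 2*p.2) = g (2*p.1, 2*p.2) := by
    intro p
    rw [show 2*p.1 + 2*p.2 = 2*(p.1+p.2) from by ring, pow_mul]
    norm_num
  have h01 : ∀ p : ℕ × ℕ, (-1:ℝ) ^ ((2*p.1) + (2*p.2+1)) * g (2*p.1, 2*p.2+1) =
      -g (2*p.1, 2*p.2+1) := by
    intro p
    rw [show 2*p.1 + (2*p.2+1) = 2*(p.1+p.2)+1 from by ring, pow_succ, pow_mul]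
    norm_num
  have h10 : ∀ p : ℕ × ℕ, (-1:ℝ) ^ ((2*p.1+1) + (2*p.2)) * g (2*p.1+1, 2*p.2) =
      -g (2*p.1+1, 2*p.2) := by
    intro p
    rw [show 2*p.1+1 + 2*p.2 = 2*(p.1+p.2)+1 from by ring, pow_succ, pow_mul]
    norm_num
  have h11 : ∀ p : ℕ × ℕ, (-1:ℝ) ^ ((2*p.1+1) + (2*p.2+1)) * g (2*p.1+1, 2*p.2+1) =
      g (2*p.1+1, 2*p.2+1) := by
    intro p
    rw [show 2*p.1+1 + (2*p.2+1) = 2*(p.1+p.2+1) from by ring, pow_mul]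
    norm_num
  rw [tsum_congr h00, tsum_congr h01, tsum_congr h10, tsum_congr h11, tsum_neg, tsum_neg]
  rw [A00, A01, A10, A11]
  ring

lemma hFLpar : FL = A00 + A01 - A10 - A11 := by
  rw [FL, parity _ sumFL]
  have h10 : ∀ p : ℕ × ℕ, (-1:ℝ) ^ ((2*p.1+1) : ℕ) * g (2*p.1+1, 2*p.2) =
      -g (2*p.1+1, 2*p.2) := by
    intro p; rw [pow_succ, pow_mul]; norm_num
  have h11 : ∀ p : ℕ × ℕ, (-1:ℝ) ^ ((2*p.1+1) : ℕ) * g (2*p.1+1, 2*p.2+1) =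
      -g (2*p.1+1, 2*p.2+1) := by
    intro p; rw [pow_succ, pow_mul]; norm_num
  have h00 : ∀ p : ℕ × ℕ, (-1:ℝ) ^ ((2*p.1) : ℕ) * g (2*p.1, 2*p.2) = g (2*p.1, 2*p.2) := by
    intro p; rw [pow_mul]; norm_num
  have h01 : ∀ p : ℕ × ℕ, (-1:ℝ) ^ ((2*p.1) : ℕ) * g (2*p.1, 2*p.2+1) = g (2*p.1, 2*p.2+1) := by
    intro p; rw [pow_mul]; norm_num
  rw [tsum_congr h00, tsum_congr h01, tsum_congr h10, tsum_congr h11, tsum_neg, tsum_neg]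
  rw [A00, A01, A10, A11]
  ring

lemma hbc : A01 = A10 := by
  rw [A01, ← (Equiv.prodComm ℕ ℕ).tsum_eq (fun p : ℕ × ℕ => g (2*p.1, 2*p.2+1))]
  rw [A10]
  exact tsum_congr fun p => by simp [Equiv.prodComm]; rw [g_swap]

lemma hd : A11 = (1/8) * V := by
  rw [A11, V, ← tsum_mul_left]
  apply tsum_congr
  intro p
  simp only [g]
  push_cast
  have h1 : ((p.1:ℝ) + 1) ≠ 0 := by positivity
  have h2 : ((p.2:ℝ) + 1) ≠ 0 := by positivity
  have h3 : ((p.1:ℝ) + (p.2:ℝ) + 2) ≠ 0 := by positivity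
  field_simp
  ring

lemma sumZ : Summable (fun k : ℕ => 1 / ((k:ℝ)+1)^3) := by
  have h := (Real.summable_one_div_nat_pow (p := 3)).mpr (by norm_num)
  have h2 := h.comp_injective Nat.succ_injective
  apply h2.congr
  intro k
  show 1 / ((Nat.succ k : ℕ) : ℝ)^3 = _
  push_cast
  ring

lemma sumEta : Summable (fun k : ℕ => (-1:ℝ)^k / ((k:ℝ)+1)^3) := by
  rw [← summable_abs_iff]
  apply sumZ.congr
  intro k
  rw [abs_div, abs_pow, abs_neg, abs_one, one_pow, abs_of_nonneg (by positivity : (0:ℝ) ≤ ((k:ℝ)+1)^3)]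

noncomputable def Zv : ℝ := ∑' k : ℕ, 1 / ((k:ℝ)+1)^3
noncomputable def Eta : ℝ := ∑' k : ℕ, (-1:ℝ)^k / ((k:ℝ)+1)^3

lemma two_mul_inj : Function.Injective (fun k : ℕ => 2 * k) := fun a b h => by
  simp only at h; omega

lemma two_mul_add_one_inj : Function.Injective (fun k : ℕ => 2 * k + 1) := fun a b h => by
  simp only at h; omega

set_option maxHeartbeats 1000000 in
lemma hEta : Eta = (3/4) * Zv := by
  have he : Summable (fun k : ℕ => 1 / (((2*k : ℕ):ℝ)+1)^3) :=
    sumZ.comp_injective two_mul_inj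
  have ho : Summable (fun k : ℕ => 1 / (((2*k+1 : ℕ):ℝ)+1)^3) :=
    sumZ.comp_injective two_mul_add_one_inj
  have hZ := tsum_even_add_odd (f := fun k : ℕ => 1/((k:ℝ)+1)^3) he ho
  have he' : Summable (fun k : ℕ => (-1:ℝ)^(2*k) / (((2*k : ℕ):ℝ)+1)^3) :=
    sumEta.comp_injective two_mul_inj
  have ho' : Summable (fun k : ℕ => (-1:ℝ)^(2*k+1) / (((2*k+1 : ℕ):ℝ)+1)^3) :=
    sumEta.comp_injective two_mul_add_one_inj
  have hH := tsum_even_add_odd (f := fun k : ℕ => (-1:ℝ)^k/((k:ℝ)+1)^3) he' ho'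
  have even1 : (∑' k : ℕ, (-1:ℝ)^(2*k) / (((2*k : ℕ):ℝ)+1)^3) =
      ∑' k : ℕ, 1 / (((2*k : ℕ):ℝ)+1)^3 := by
    apply tsum_congr; intro k; rw [pow_mul]; norm_num
  have odd1 : (∑' k : ℕ, (-1:ℝ)^(2*k+1) / (((2*k+1 : ℕ):ℝ)+1)^3) =
      ∑' k : ℕ, -((1/8) * (1 / ((k:ℝ)+1)^3)) := by
    apply tsum_congr; intro k
    rw [pow_succ, pow_mul]
    push_cast
    have : ((k:ℝ)+1) ≠ 0 := by positivity
    field_simp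
    ring
  have odd2 : (∑' k : ℕ, 1 / (((2*k+1 : ℕ):ℝ)+1)^3) =
      ∑' k : ℕ, (1/8) * (1 / ((k:ℝ)+1)^3) := by
    apply tsum_congr; intro k
    push_cast
    have : ((k:ℝ)+1) ≠ 0 := by positivity
    field_simp
    ring
  rw [even1, odd1, tsum_neg, tsum_mul_left] at hH
  rw [odd2, tsum_mul_left] at hZ
  rw [Eta, Zv, ← hZ, ← hH]
  linarith

lemma sumS : Summable (fun k : ℕ => (-1:ℝ)^k * harm 1 (k+1) / ((k:ℝ)+1)^2) := by
  rw [← summable_abs_iff]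
  apply sumE.congr
  intro k
  rw [abs_div, abs_mul, abs_pow, abs_neg, abs_one, one_pow, one_mul,
    abs_of_nonneg (harm_nonneg (k+1)),
    abs_of_nonneg (by positivity : (0:ℝ) ≤ ((k:ℝ)+1)^2)]

lemma sumD2 : Summable (fun s : ℕ => 2 * harm 1 (s+1) / ((s:ℝ)+2)^2) := by
  refine Summable.of_nonneg_of_le ?_ ?_ (sumE.mul_left 2)
  · intro s
    have := harm_nonneg (s+1)
    positivity
  · intro s
    rw [mul_div_assoc]
    apply mul_le_mul_of_nonneg_left _ (by norm_num : (0:ℝ) ≤ 2)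
    apply div_le_div_of_nonneg_left (harm_nonneg (s+1)) (by positivity)
    nlinarith [Nat.cast_nonneg (α := ℝ) s]

lemma sumD2sgn : Summable (fun s : ℕ => (-1:ℝ)^s * (2 * harm 1 (s+1) / ((s:ℝ)+2)^2)) := by
  rw [← summable_abs_iff]
  apply sumD2.congr
  intro s
  have := harm_nonneg (s+1)
  rw [abs_mul, abs_pow, abs_neg, abs_one, one_pow, one_mul,
    abs_of_nonneg (by positivity : (0:ℝ) ≤ 2 * harm 1 (s+1) / ((s:ℝ)+2)^2)]

lemma sumZ3shift : Summable (fun s : ℕ => 1 / ((s:ℝ)+2)^3) := by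
  have := (summable_nat_add_iff 1).mpr sumZ
  apply this.congr
  intro s
  push_cast
  ring_nf

lemma sumZ3sgn : Summable (fun s : ℕ => (-1:ℝ)^s / ((s:ℝ)+2)^3) := by
  rw [← summable_abs_iff]
  apply sumZ3shift.congr
  intro s
  rw [abs_div, abs_pow, abs_neg, abs_one, one_pow,
    abs_of_nonneg (by positivity : (0:ℝ) ≤ ((s:ℝ)+2)^3)]

lemma hTZ : Zv = 1 + ∑' s : ℕ, 1 / ((s:ℝ)+2)^3 := by
  rw [Zv, Summable.tsum_eq_zero_add sumZ]
  norm_num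
  apply tsum_congr
  intro s
  push_cast
  ring_nf

lemma hTE : Eta = 1 - ∑' s : ℕ, (-1:ℝ)^s / ((s:ℝ)+2)^3 := by
  rw [Eta, Summable.tsum_eq_zero_add sumEta]
  have h1 : ∀ s : ℕ, (-1:ℝ)^(s+1) / ((↑(s+1):ℝ)+1)^3 = -((-1:ℝ)^s / ((s:ℝ)+2)^3) := by
    intro s
    rw [pow_succ]
    push_cast
    ring_nf
  rw [tsum_congr h1, tsum_neg]
  norm_num [harm_one_one]
  ring

lemma hSrel : S = Eta - (1/2) * W := by
  rw [S, Summable.tsum_eq_zero_add sumS]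
  have h1 : ∀ s : ℕ, (-1:ℝ)^(s+1) * harm 1 ((s+1)+1) / ((↑(s+1):ℝ)+1)^2 =
      -(1/2) * ((-1:ℝ)^s * (2 * harm 1 (s+1) / ((s:ℝ)+2)^2)) - (-1:ℝ)^s / ((s:ℝ)+2)^3 := by
    intro s
    rw [harm_one (s+1), pow_succ]
    push_cast
    have hs2 : ((s:ℝ)+2) ≠ 0 := by positivity
    field_simp
    ring
  rw [tsum_congr h1, Summable.tsum_sub (sumD2sgn.mul_left (-(1/2))) sumZ3sgn, tsum_mul_left,
    ← hWdiag]
  have hTE' := hTE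
  norm_num [harm_one_one]
  linarith [hTE']

lemma hVrel : V = 2 * Zv := by
  have hstart : V = 1 + ∑' s : ℕ, harm 1 ((s+1)+1) / ((↑(s+1):ℝ)+1)^2 := by
    rw [hV, Summable.tsum_eq_zero_add sumE]
    norm_num [harm_one_one]
  have h1 : ∀ s : ℕ, harm 1 ((s+1)+1) / ((↑(s+1):ℝ)+1)^2 =
      (1/2) * (2 * harm 1 (s+1) / ((s:ℝ)+2)^2) + 1 / ((s:ℝ)+2)^3 := by
    intro s
    rw [harm_one (s+1)]
    push_cast
    have hs2 : ((s:ℝ)+2) ≠ 0 := by positivity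
    field_simp
    ring
  rw [tsum_congr h1, Summable.tsum_add (sumD2.mul_left (1/2)) sumZ3shift, tsum_mul_left,
    ← hVdiag] at hstart
  have := hTZ
  linarith

end Stmt10

theorem stmt10 : ∑' k : ℕ, (-1:ℝ)^k * harm 1 (k+1) / ((k:ℝ)+1)^2 = (5/8) * zetaVal 3 := by
  have hZ : zetaVal 3 = Stmt10.Zv := rfl
  have hS : (∑' k : ℕ, (-1:ℝ)^k * harm 1 (k+1) / ((k:ℝ)+1)^2) = Stmt10.S := rfl
  rw [hZ, hS]
  have e1 := Stmt10.hVpar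
  have e2 := Stmt10.hWpar
  have e3 := Stmt10.hFLpar
  have e4 := Stmt10.hbc
  have e5 := Stmt10.hd
  have e6 := Stmt10.hFL
  have e7 := Stmt10.hSrel
  have e8 := Stmt10.hVrel
  have e9 := Stmt10.hEta
  linarith
end

section
/- Li₃(1/2) = (7/8)ζ(3) − (1/12)π²ln(2) + (1/6)ln(2)³. -/
open MeasureTheory Real

open Filter Topology Set

lemma summable_D {m : ℕ} {x : ℝ} (hx : |x| < 1) :
    Summable fun k : ℕ => x ^ k / ((k : ℝ) + 1) ^ m := by
  apply Summable.of_norm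
  apply Summable.of_nonneg_of_le (fun k => norm_nonneg _) (fun k => ?_)
    (summable_geometric_of_lt_one (abs_nonneg x) hx)
  rw [norm_eq_abs, abs_div, abs_pow, abs_pow]
  have h1 : (1:ℝ) ≤ |(k : ℝ) + 1| ^ m := by
    apply one_le_pow₀  -- maybe wrong name
    rw [abs_of_nonneg (by positivity)]; linarith [Nat.cast_nonneg (α := ℝ) k]
  calc |x| ^ k / |(k : ℝ) + 1| ^ m ≤ |x| ^ k / 1 := by
        apply div_le_div_of_nonneg_left ?_ ?_ h1 <;> positivity
    _ = |x| ^ k := div_one _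

lemma hasDerivAt_polylog (m : ℕ) {x : ℝ} (hx : |x| < 1) :
    HasDerivAt (polylog (m + 1)) (∑' k : ℕ, x ^ k / ((k : ℝ) + 1) ^ m) x := by
  set r : ℝ := (1 + |x|) / 2 with hr
  have hr0 : 0 ≤ r := by positivity
  have hxr : |x| < r := by rw [hr]; linarith
  have hr1 : r < 1 := by rw [hr]; linarith
  have key : HasDerivAt (fun z : ℝ => ∑' k : ℕ, z ^ (k + 1) / ((k : ℝ) + 1) ^ (m + 1))
      (∑' k : ℕ, x ^ k / ((k : ℝ) + 1) ^ m) x := by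
    apply hasDerivAt_tsum_of_isPreconnected (u := fun k : ℕ => r ^ k)
      (g' := fun k y => y ^ k / ((k : ℝ) + 1) ^ m)
      (summable_geometric_of_lt_one hr0 hr1) isOpen_Ioo (t := Ioo (-r) r)
      (convex_Ioo _ _).isPreconnected ?_ ?_ (y₀ := 0) ?_ ?_ ?_
    · intro n y _
      have h := (hasDerivAt_pow (n + 1) y).div_const (((n : ℝ) + 1) ^ (m + 1))
      refine h.congr_deriv ?_
      have hn : ((n : ℝ) + 1) ≠ 0 := by positivity
      push_cast
      rw [pow_succ ((n:ℝ)+1) m]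
      field_simp
    · intro n y hy
      have hy' : |y| ≤ r := by
        rw [abs_le]; constructor <;> [linarith [hy.1]; linarith [hy.2]]
      rw [norm_eq_abs, abs_div, abs_pow, abs_pow]
      have h1 : (1:ℝ) ≤ |(n : ℝ) + 1| ^ m := by
        apply one_le_pow₀
        rw [abs_of_nonneg (by positivity)]; linarith [Nat.cast_nonneg (α := ℝ) n]
      calc |y| ^ n / |(n : ℝ) + 1| ^ m ≤ |y| ^ n / 1 := by
            apply div_le_div_of_nonneg_left ?_ ?_ h1 <;> positivity
        _ = |y| ^ n := div_one _
        _ ≤ r ^ n := pow_le_pow_left₀ (abs_nonneg _) hy' n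
    · exact ⟨by linarith [abs_nonneg x], by linarith [abs_nonneg x]⟩
    · exact (summable_zero).congr (by intro k; simp)
    · exact ⟨neg_lt_of_abs_lt hxr, lt_of_abs_lt hxr⟩
  exact key

lemma polylog_eq_mul {m : ℕ} (x : ℝ) :
    polylog m x = x * ∑' k : ℕ, x ^ k / ((k : ℝ) + 1) ^ m := by
  rw [polylog, ← tsum_mul_left]
  congr 1; funext k; rw [pow_succ']; ring

lemma tsum_D_eq {m : ℕ} {x : ℝ} (hx0 : x ≠ 0) :
    (∑' k : ℕ, x ^ k / ((k : ℝ) + 1) ^ m) = polylog m x / x := by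
  rw [polylog_eq_mul]; field_simp

lemma polylog_one_eq {x : ℝ} (hx : |x| < 1) : polylog 1 x = -Real.log (1 - x) := by
  rw [polylog, ← (hasSum_pow_div_log_of_abs_lt_one hx).tsum_eq]
  congr 1; funext k; push_cast; rw [pow_one]

lemma hasDerivAt_polylog_two {x : ℝ} (hx : |x| < 1) (hx0 : x ≠ 0) :
    HasDerivAt (polylog 2) (-Real.log (1 - x) / x) x := by
  have h := hasDerivAt_polylog 1 hx
  rwa [tsum_D_eq hx0, polylog_one_eq hx] at h

lemma hasDerivAt_polylog_three {x : ℝ} (hx : |x| < 1) (hx0 : x ≠ 0) :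
    HasDerivAt (polylog 3) (polylog 2 x / x) x := by
  have h := hasDerivAt_polylog 2 hx
  rwa [tsum_D_eq hx0] at h

lemma polylog_zero_val (m : ℕ) : polylog m 0 = 0 := by
  rw [polylog]; convert tsum_zero with k; simp

lemma summable_inv_sq : Summable fun k : ℕ => 1 / ((k : ℝ) + 1) ^ 2 := by
  have := (summable_nat_add_iff 1).mpr (Real.summable_one_div_nat_pow.mpr (le_refl 2))
  apply this.congr; intro k; push_cast; ring

lemma continuousOn_polylog {m : ℕ} (hm : 2 ≤ m) :
    ContinuousOn (polylog m) (Icc (-1 : ℝ) 1) := by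
  have : ContinuousOn (fun x : ℝ => ∑' k : ℕ, x ^ (k + 1) / ((k : ℝ) + 1) ^ m)
      (Icc (-1 : ℝ) 1) := by
    apply continuousOn_tsum (u := fun k : ℕ => 1 / ((k : ℝ) + 1) ^ 2)
      (fun k => (continuous_pow (k+1)).continuousOn.div_const _) summable_inv_sq
    intro n x hx
    have hx1 : |x| ≤ 1 := abs_le.mpr ⟨hx.1, hx.2⟩
    rw [norm_eq_abs, abs_div, abs_pow, abs_of_nonneg (a := ((n:ℝ)+1)^m) (by positivity)]
    have hn1 : (1:ℝ) ≤ (n:ℝ) + 1 := by linarith [Nat.cast_nonneg (α := ℝ) n]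
    apply div_le_div₀ (by positivity) ?_ (by positivity) ?_
    · calc |x| ^ (n+1) ≤ 1 ^ (n+1) := pow_le_pow_left₀ (abs_nonneg _) hx1 _
        _ = 1 := one_pow _
    · exact pow_le_pow_right₀ hn1 hm
  exact this

lemma polylog_two_one : polylog 2 1 = π ^ 2 / 6 := by
  have h := hasSum_zeta_two
  have hs : Summable fun n : ℕ => (1 : ℝ) / (n : ℝ) ^ 2 := h.summable
  have := h.tsum_eq
  rw [polylog]
  rw [hs.tsum_eq_zero_add] at this
  simp only [Nat.cast_zero, one_pow, one_mul] at this ⊢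
  rw [← this]
  rw [show ((1:ℝ)/(0:ℝ)^2) = 0 by norm_num, zero_add]
  congr 1; funext k; push_cast; ring

lemma polylog_three_one : polylog 3 1 = zetaVal 3 := by
  rw [polylog, zetaVal]; congr 1; funext k; rw [one_pow]

lemma summable_inv_cube : Summable fun k : ℕ => 1 / ((k : ℝ) + 1) ^ 3 := by
  have := (summable_nat_add_iff 1).mpr (Real.summable_one_div_nat_pow.mpr
    (by norm_num : 2 ≤ 3))
  apply this.congr; intro k; push_cast; ring

set_option maxHeartbeats 1000000 in
lemma polylog_three_neg_one : polylog 3 (-1) = -(3 / 4) * zetaVal 3 := by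
  set z : ℝ := zetaVal 3 with hz
  have hg : HasSum (fun k : ℕ => 1 / ((k : ℝ) + 1) ^ 3) z := by
    rw [hz, zetaVal]; exact summable_inv_cube.hasSum
  have hodd : HasSum (fun j : ℕ => 1 / (((2 * j + 1 : ℕ) : ℝ) + 1) ^ 3) (z / 8) := by
    have h8 := hg.mul_left (1 / 8)
    have heq : (fun j : ℕ => 1 / (((2 * j + 1 : ℕ) : ℝ) + 1) ^ 3)
        = fun j : ℕ => 1 / 8 * (1 / ((j : ℝ) + 1) ^ 3) := by
      funext j
      have hj : ((j : ℝ) + 1) ≠ 0 := by positivity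
      push_cast
      rw [show (2 * (j : ℝ) + 1 + 1) = 2 * ((j : ℝ) + 1) by ring, mul_pow]
      rw [one_div, one_div, one_div, mul_inv]
      norm_num
    rw [heq, show z / 8 = 1 / 8 * z by ring]
    exact h8
  have hinj : Function.Injective (fun j : ℕ => 2 * j) := by
    intro a b hab; simp only at hab; omega
  have hevensum : Summable (fun j : ℕ => 1 / (((2 * j : ℕ) : ℝ) + 1) ^ 3) :=
    hg.summable.comp_injective hinj
  set A : ℝ := ∑' j : ℕ, 1 / (((2 * j : ℕ) : ℝ) + 1) ^ 3 with hA
  have heven : HasSum (fun j : ℕ => 1 / (((2 * j : ℕ) : ℝ) + 1) ^ 3) A := hevensum.hasSum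
  have htot := HasSum.even_add_odd (f := fun k : ℕ => 1 / ((k : ℝ) + 1) ^ 3) heven hodd
  have hAz : A + z / 8 = z := htot.unique hg
  set f : ℕ → ℝ := fun k => (-1 : ℝ) ^ (k + 1) / ((k : ℝ) + 1) ^ 3 with hf
  have hfe : HasSum (fun j : ℕ => f (2 * j)) (-A) := by
    have heq : (fun j : ℕ => f (2 * j)) = fun j : ℕ => -(1 / (((2 * j : ℕ) : ℝ) + 1) ^ 3) := by
      funext j; rw [hf]; simp only []
      rw [Odd.neg_one_pow (⟨j, by omega⟩ : Odd (2 * j + 1))]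
      ring
    rw [heq]
    exact heven.neg
  have hfo : HasSum (fun j : ℕ => f (2 * j + 1)) (z / 8) := by
    have heq : (fun j : ℕ => f (2 * j + 1)) = fun j : ℕ => 1 / (((2 * j + 1 : ℕ) : ℝ) + 1) ^ 3 := by
      funext j; rw [hf]; simp only []
      rw [Even.neg_one_pow (⟨j + 1, by omega⟩ : Even (2 * j + 1 + 1))]
    rw [heq]
    exact hodd
  have hfs : HasSum f (-A + z / 8) := HasSum.even_add_odd (f := f) hfe hfo
  have : polylog 3 (-1) = -A + z / 8 := by
    rw [polylog, ← hfs.tsum_eq]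
  rw [this]
  linarith

lemma tendsto_log_one_sub_div : Tendsto (fun t : ℝ => Real.log (1 - t) / t)
    (𝓝[>] (0 : ℝ)) (𝓝 (-1)) := by
  have hd : HasDerivAt (fun t : ℝ => Real.log (1 - t)) (-1) 0 := by
    have h1 : HasDerivAt (fun t : ℝ => 1 - t) (-1) 0 := by
      simpa using (hasDerivAt_id (0:ℝ)).const_sub 1
    have := h1.log (by norm_num)
    simpa using this
  have := hasDerivAt_iff_tendsto_slope.mp hd
  have h2 : Tendsto (slope (fun t : ℝ => Real.log (1 - t)) 0) (𝓝[>] (0:ℝ)) (𝓝 (-1)) :=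
    this.mono_left (nhdsWithin_mono _ (fun t ht => ne_of_gt ht))
  apply h2.congr'
  filter_upwards [self_mem_nhdsWithin] with t ht
  rw [slope_def_field]
  simp [div_eq_div_iff]

lemma tendsto_pow_mul_log (n : ℕ) (hn : 0 < n) :
    Tendsto (fun t : ℝ => t ^ n * Real.log t) (𝓝[>] (0 : ℝ)) (𝓝 0) := by
  have h := tendsto_log_mul_rpow_nhdsGT_zero (r := (n : ℝ)) (by exact_mod_cast hn)
  apply h.congr'
  filter_upwards [self_mem_nhdsWithin] with t ht
  rw [Real.rpow_natCast]
  ring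

lemma tendsto_logpow_mul_log (n : ℕ) (hn : 0 < n) :
    Tendsto (fun x : ℝ => Real.log x ^ n * Real.log (1 - x)) (𝓝[<] (1 : ℝ)) (𝓝 0) := by
  have key : Tendsto (fun t : ℝ => Real.log (1 - t) ^ n * Real.log t) (𝓝[>] (0:ℝ)) (𝓝 0) := by
    have h1 := (tendsto_log_one_sub_div.pow n).mul (tendsto_pow_mul_log n hn)
    rw [mul_zero] at h1
    apply h1.congr'
    filter_upwards [self_mem_nhdsWithin] with t ht
    have ht0 : (t : ℝ) ≠ 0 := ne_of_gt ht
    field_simp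
    linear_combination (Real.log (1 - t) ^ n * Real.log t) * mul_inv_cancel₀ (pow_ne_zero n ht0)
  have hsub : Tendsto (fun x : ℝ => 1 - x) (𝓝[<] (1:ℝ)) (𝓝[>] (0:ℝ)) := by
    apply tendsto_nhdsWithin_of_tendsto_nhds_of_eventually_within (fun x : ℝ => 1 - x)
    · have h0 : Continuous (fun x : ℝ => 1 - x) := continuous_const.sub continuous_id
      have : Tendsto (fun x : ℝ => 1 - x) (𝓝 (1:ℝ)) (𝓝 0) := by
        simpa using h0.tendsto (1:ℝ)
      exact this.mono_left nhdsWithin_le_nhds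
    · filter_upwards [self_mem_nhdsWithin] with x hx
      simp only [mem_Iio] at hx
      simp [mem_Ioi]; linarith
  have := key.comp hsub
  apply this.congr'
  filter_upwards [self_mem_nhdsWithin] with x hx
  simp only [Function.comp_apply]
  rw [show (1 : ℝ) - (1 - x) = x by ring]

lemma cwa_logpow_mul_log {n : ℕ} (hn : 0 < n) {a : ℝ} (ha : a < 1) :
    ContinuousWithinAt (fun y : ℝ => Real.log y ^ n * Real.log (1 - y)) (Icc a 1) 1 := by
  rw [← continuousWithinAt_diff_self]
  unfold ContinuousWithinAt
  rw [show ((fun y : ℝ => Real.log y ^ n * Real.log (1 - y)) 1) = 0 by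
    simp [Real.log_one, zero_pow hn.ne']]
  exact (tendsto_logpow_mul_log n hn).mono_left
    (nhdsWithin_mono _ (fun y hy => lt_of_le_of_ne hy.1.2 hy.2))

lemma eq_of_deriv_zero {f : ℝ → ℝ} {a b : ℝ} (hab : a < b)
    (hfc : ContinuousOn f (Icc a b)) (hder : ∀ x ∈ Ioo a b, HasDerivAt f 0 x) :
    f a = f b := by
  obtain ⟨c, _, h⟩ := exists_hasDerivAt_eq_slope f (fun _ => 0) hab hfc hder
  have hba : b - a ≠ 0 := ne_of_gt (by linarith)
  field_simp at h
  linarith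

lemma contOn_logpow_mul_log {n : ℕ} (hn : 0 < n) {a : ℝ} (ha0 : 0 < a) (ha : a < 1) :
    ContinuousOn (fun y : ℝ => Real.log y ^ n * Real.log (1 - y)) (Icc a 1) := by
  intro y hy
  rcases eq_or_lt_of_le hy.2 with h1 | h1
  · rw [h1]
    exact cwa_logpow_mul_log hn ha
  · apply ContinuousAt.continuousWithinAt
    have hy0 : 0 < y := lt_of_lt_of_le ha0 hy.1
    apply ContinuousAt.mul ((Real.continuousAt_log (ne_of_gt hy0)).pow n)
    have hc : ContinuousAt (fun y : ℝ => 1 - y) y := (continuous_const.sub continuous_id).continuousAt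
    exact (Real.continuousAt_log (by simp; linarith)).comp hc

lemma contOn_polylog_comp {m : ℕ} (hm : 2 ≤ m) {g : ℝ → ℝ} {s : Set ℝ}
    (hg : ContinuousOn g s) (hmaps : ∀ y ∈ s, g y ∈ Icc (-1:ℝ) 1) :
    ContinuousOn (fun y => polylog m (g y)) s :=
  (continuousOn_polylog hm).comp hg hmaps

lemma dilog_reflection {x : ℝ} (hx0 : 0 < x) (hx1 : x < 1) :
    polylog 2 x = π ^ 2 / 6 - Real.log x * Real.log (1 - x) - polylog 2 (1 - x) := by
  set φ : ℝ → ℝ := fun y => polylog 2 y + polylog 2 (1 - y)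
    + Real.log y * Real.log (1 - y) with hφ
  have key : φ x = φ 1 := by
    apply eq_of_deriv_zero hx1
    · -- continuity
      apply ContinuousOn.add
      apply ContinuousOn.add
      · exact (continuousOn_polylog le_rfl).mono (fun y hy =>
          ⟨by linarith [hy.1], hy.2⟩)
      · apply contOn_polylog_comp le_rfl (continuous_const.sub continuous_id).continuousOn
        intro y hy
        constructor <;> simp <;> [linarith [hy.2]; linarith [hy.1, hx0]]
      · have := contOn_logpow_mul_log (n := 1) one_pos hx0 hx1
        apply this.congr
        intro y _; simp [pow_one]
    · -- derivative
      intro y hy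
      have hy0 : 0 < y := lt_trans hx0 hy.1
      have hy1 : y < 1 := hy.2
      have h1y0 : 0 < 1 - y := by linarith
      have habs : |y| < 1 := abs_lt.mpr ⟨by linarith, hy1⟩
      have habs' : |1 - y| < 1 := abs_lt.mpr ⟨by linarith, by linarith⟩
      have d1 : HasDerivAt (polylog 2) (-Real.log (1 - y) / y) y :=
        hasDerivAt_polylog_two habs (ne_of_gt hy0)
      have dsub : HasDerivAt (fun z : ℝ => 1 - z) (-1) y := by
        simpa using (hasDerivAt_id y).const_sub 1
      have d2' : HasDerivAt (polylog 2) (-Real.log (1 - (1 - y)) / (1 - y)) (1 - y) :=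
        hasDerivAt_polylog_two habs' (ne_of_gt h1y0)
      have d2 : HasDerivAt (fun z : ℝ => polylog 2 (1 - z))
          ((-Real.log (1 - (1 - y)) / (1 - y)) * (-1)) y := d2'.comp y dsub
      have dlog1 : HasDerivAt Real.log y⁻¹ y := Real.hasDerivAt_log (ne_of_gt hy0)
      have dlog2 : HasDerivAt (fun z : ℝ => Real.log (1 - z)) ((1 - y)⁻¹ * (-1)) y :=
        (Real.hasDerivAt_log (ne_of_gt h1y0)).comp y dsub
      have d3 : HasDerivAt (fun z : ℝ => Real.log z * Real.log (1 - z))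
          (y⁻¹ * Real.log (1 - y) + Real.log y * ((1 - y)⁻¹ * (-1))) y := dlog1.mul dlog2
      have D := (d1.add d2).add d3
      rw [show (1 : ℝ) - (1 - y) = y by ring] at D
      have hE : -Real.log (1 - y) / y + -Real.log y / (1 - y) * (-1)
          + (y⁻¹ * Real.log (1 - y) + Real.log y * ((1 - y)⁻¹ * (-1))) = 0 := by
        field_simp
        ring
      rw [hE] at D
      exact D
  have hφ1 : φ 1 = π ^ 2 / 6 := by
    rw [hφ]; simp [polylog_zero_val, polylog_two_one, Real.log_one]
  rw [hφ1] at key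
  rw [hφ] at key
  simp only at key
  linarith

lemma dilog_landen {x : ℝ} (hx0 : 1/2 < x) (hx1 : x < 1) :
    polylog 2 (1 - 1/x) = -polylog 2 (1 - x) - Real.log x ^ 2 / 2 := by
  set h : ℝ → ℝ := fun y => polylog 2 (1 - 1/y) + polylog 2 (1 - y)
    + Real.log y ^ 2 / 2 with hh
  have key : h x = h 1 := by
    apply eq_of_deriv_zero hx1
    · apply ContinuousOn.add
      apply ContinuousOn.add
      · apply contOn_polylog_comp le_rfl
        · apply ContinuousOn.sub continuousOn_const
          apply ContinuousOn.div continuousOn_const continuousOn_id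
          intro y hy
          exact ne_of_gt (lt_of_lt_of_le (by linarith) hy.1)
        · intro y hy
          have hy0 : (1/2 : ℝ) < y := lt_of_lt_of_le hx0 hy.1
          have h2 : 1/y < 2 := by
            rw [div_lt_iff₀ (by linarith)]; linarith
          have h3 : 1 ≤ 1/y := by
            rw [le_div_iff₀ (by linarith)]; simpa using hy.2
          simp only [mem_Icc, id_eq]
          exact ⟨by linarith, by linarith⟩
      · apply contOn_polylog_comp le_rfl (continuous_const.sub continuous_id).continuousOn
        intro y hy
        simp only [mem_Icc, id_eq, Pi.sub_apply]
        exact ⟨by linarith [hy.2], by linarith [hy.1, hx0]⟩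
      · apply ContinuousOn.div_const
        apply ContinuousOn.pow
        intro y hy
        exact (Real.continuousAt_log (ne_of_gt (lt_of_lt_of_le (by linarith) hy.1))).continuousWithinAt
    · intro y hy
      have hy0 : 0 < y := by have := hy.1; linarith
      have hyh : 1/2 < y := lt_trans hx0 hy.1
      have hy1 : y < 1 := hy.2
      have h1y0 : 0 < 1 - y := by linarith
      have hz0 : 1 - 1/y < 0 := by
        have : 1 < 1/y := by rw [lt_div_iff₀ hy0]; linarith
        linarith
      have hz1 : -1 < 1 - 1/y := by
        have : 1/y < 2 := by rw [div_lt_iff₀ hy0]; linarith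
        linarith
      have habsz : |1 - 1/y| < 1 := abs_lt.mpr ⟨hz1, by linarith⟩
      have habs' : |1 - y| < 1 := abs_lt.mpr ⟨by linarith, by linarith⟩
      have dinv : HasDerivAt (fun z : ℝ => 1 - 1/z) (1/y^2) y := by
        simp only [one_div]
        simpa using (hasDerivAt_inv (ne_of_gt hy0)).const_sub 1
      have d1' : HasDerivAt (polylog 2) (-Real.log (1 - (1 - 1/y)) / (1 - 1/y)) (1 - 1/y) :=
        hasDerivAt_polylog_two habsz (ne_of_lt hz0)
      have d1 : HasDerivAt (fun z : ℝ => polylog 2 (1 - 1/z))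
          ((-Real.log (1 - (1 - 1/y)) / (1 - 1/y)) * (1/y^2)) y := by
          have := d1'.comp y dinv; exact this
      have dsub : HasDerivAt (fun z : ℝ => 1 - z) (-1) y := by
        simpa using (hasDerivAt_id y).const_sub 1
      have d2' : HasDerivAt (polylog 2) (-Real.log (1 - (1 - y)) / (1 - y)) (1 - y) :=
        hasDerivAt_polylog_two habs' (ne_of_gt h1y0)
      have d2 : HasDerivAt (fun z : ℝ => polylog 2 (1 - z))
          ((-Real.log (1 - (1 - y)) / (1 - y)) * (-1)) y := d2'.comp y dsub
      have dlog1 : HasDerivAt Real.log y⁻¹ y := Real.hasDerivAt_log (ne_of_gt hy0)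
      have d3 : HasDerivAt (fun z : ℝ => Real.log z ^ 2 / 2)
          ((2 * Real.log y ^ 1 * y⁻¹) / 2) y := (dlog1.pow 2).div_const 2
      have D := (d1.add d2).add d3
      rw [show (1 : ℝ) - (1 - y) = y by ring,
        show (1 : ℝ) - (1 - 1/y) = 1/y by ring] at D
      have hE : -Real.log (1/y) / (1 - 1/y) * (1/y^2)
          + -Real.log y / (1 - y) * (-1) + 2 * Real.log y ^ 1 * y⁻¹ / 2 = 0 := by
        rw [one_div y, Real.log_inv]
        have hyne : y ≠ 0 := ne_of_gt hy0
        have h1yne : (1:ℝ) - y ≠ 0 := ne_of_gt h1y0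
        have hzne : (1:ℝ) - y⁻¹ ≠ 0 := by
          rw [one_div] at hz0; exact ne_of_lt hz0
        have hkey : -y^2 + y^3 ≠ 0 := by
          rw [show -y^2 + y^3 = y^2 * (y-1) by ring]
          exact mul_ne_zero (pow_ne_zero 2 hyne) (sub_ne_zero.mpr (ne_of_lt hy1))
        field_simp [hkey]
        have hcc : (-y^2 + y^3) * (-y^2 + y^3)⁻¹ = 1 := mul_inv_cancel₀ hkey
        have hcc2 : (-1 + y) * (-1 + y)⁻¹ = 1 := mul_inv_cancel₀ (ne_of_lt (by linarith))
        linear_combination - Real.log y * hcc2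
      rw [hE] at D
      exact D
  have hh1 : h 1 = 0 := by
    rw [hh]; simp [polylog_zero_val, Real.log_one]
  rw [hh1] at key
  rw [hh] at key
  simp only at key
  linarith

lemma trilog_key : polylog 3 (1/2) + polylog 3 (1/2) + polylog 3 (-1)
    - Real.log (1/2) ^ 3 / 6 - π ^ 2 * Real.log (1/2) / 6
    + Real.log (1/2) ^ 2 * Real.log (1 - 1/2) / 2 = zetaVal 3 := by
  set G : ℝ → ℝ := fun y => polylog 3 y + polylog 3 (1 - y) + polylog 3 (1 - 1/y)
    - Real.log y ^ 3 / 6 - π ^ 2 * Real.log y / 6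
    + Real.log y ^ 2 * Real.log (1 - y) / 2 with hG
  have key : G (1/2) = G 1 := by
    apply eq_of_deriv_zero (by norm_num : (1/2:ℝ) < 1)
    · -- continuity on Icc (1/2) 1
      apply ContinuousOn.add
      apply ContinuousOn.sub
      apply ContinuousOn.sub
      apply ContinuousOn.add
      apply ContinuousOn.add
      · exact (continuousOn_polylog (by norm_num)).mono (fun y hy =>
          ⟨by linarith [hy.1], hy.2⟩)
      · apply contOn_polylog_comp (by norm_num)
          (continuous_const.sub continuous_id).continuousOn
        intro y hy
        simp only [mem_Icc, id_eq, Pi.sub_apply]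
        exact ⟨by linarith [hy.2], by linarith [hy.1]⟩
      · apply contOn_polylog_comp (by norm_num)
        · apply ContinuousOn.sub continuousOn_const
          apply ContinuousOn.div continuousOn_const continuousOn_id
          intro y hy
          exact ne_of_gt (lt_of_lt_of_le (by norm_num) hy.1)
        · intro y hy
          have hy0 : (0:ℝ) < y := lt_of_lt_of_le (by norm_num) hy.1
          have h2 : 1/y ≤ 2 := by
            rw [div_le_iff₀ hy0]; linarith [hy.1]
          have h3 : 1 ≤ 1/y := by
            rw [le_div_iff₀ hy0]; simpa using hy.2
          simp only [mem_Icc, id_eq]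
          exact ⟨by linarith, by linarith⟩
      · apply ContinuousOn.div_const
        apply ContinuousOn.pow
        intro y hy
        exact (Real.continuousAt_log (ne_of_gt (lt_of_lt_of_le (by norm_num) hy.1))).continuousWithinAt
      · apply ContinuousOn.div_const
        apply ContinuousOn.mul continuousOn_const
        intro y hy
        exact (Real.continuousAt_log (ne_of_gt (lt_of_lt_of_le (by norm_num) hy.1))).continuousWithinAt
      · exact (contOn_logpow_mul_log (n := 2) (by norm_num) (by norm_num) (by norm_num)).div_const 2
    · -- derivative zero on Ioo (1/2) 1
      intro y hy
      have hyh : (1/2:ℝ) < y := hy.1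
      have hy0 : 0 < y := by linarith
      have hy1 : y < 1 := hy.2
      have h1y0 : 0 < 1 - y := by linarith
      have hz0 : 1 - 1/y < 0 := by
        have : 1 < 1/y := by rw [lt_div_iff₀ hy0]; linarith
        linarith
      have hz1 : -1 < 1 - 1/y := by
        have : 1/y < 2 := by rw [div_lt_iff₀ hy0]; linarith
        linarith
      have habs : |y| < 1 := abs_lt.mpr ⟨by linarith, hy1⟩
      have habs' : |1 - y| < 1 := abs_lt.mpr ⟨by linarith, by linarith⟩
      have habsz : |1 - 1/y| < 1 := abs_lt.mpr ⟨hz1, by linarith⟩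
      have d1 : HasDerivAt (polylog 3) (polylog 2 y / y) y :=
        hasDerivAt_polylog_three habs (ne_of_gt hy0)
      have dsub : HasDerivAt (fun z : ℝ => 1 - z) (-1) y := by
        simpa using (hasDerivAt_id y).const_sub 1
      have d2 : HasDerivAt (fun z : ℝ => polylog 3 (1 - z))
          ((polylog 2 (1 - y) / (1 - y)) * (-1)) y :=
        (hasDerivAt_polylog_three habs' (ne_of_gt h1y0)).comp y dsub
      have dinv : HasDerivAt (fun z : ℝ => 1 - 1/z) (1/y^2) y := by
        simp only [one_div]
        simpa using (hasDerivAt_inv (ne_of_gt hy0)).const_sub 1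
      have d3 : HasDerivAt (fun z : ℝ => polylog 3 (1 - 1/z))
          ((polylog 2 (1 - 1/y) / (1 - 1/y)) * (1/y^2)) y :=
        by have := (hasDerivAt_polylog_three habsz (ne_of_lt hz0)).comp y dinv; exact this
      have dlog1 : HasDerivAt Real.log y⁻¹ y := Real.hasDerivAt_log (ne_of_gt hy0)
      have dlog2 : HasDerivAt (fun z : ℝ => Real.log (1 - z)) ((1 - y)⁻¹ * (-1)) y :=
        (Real.hasDerivAt_log (ne_of_gt h1y0)).comp y dsub
      have d4 : HasDerivAt (fun z : ℝ => Real.log z ^ 3 / 6)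
          ((3 * Real.log y ^ 2 * y⁻¹) / 6) y := (dlog1.pow 3).div_const 6
      have d5 : HasDerivAt (fun z : ℝ => π ^ 2 * Real.log z / 6)
          ((π ^ 2 * y⁻¹) / 6) y := ((dlog1.const_mul (π ^ 2)).div_const 6)
      have d6 : HasDerivAt (fun z : ℝ => Real.log z ^ 2 * Real.log (1 - z) / 2)
          ((2 * Real.log y ^ 1 * y⁻¹ * Real.log (1 - y)
            + Real.log y ^ 2 * ((1 - y)⁻¹ * (-1))) / 2) y :=
        ((dlog1.pow 2).mul dlog2).div_const 2
      have D := ((((d1.add d2).add d3).sub d4).sub d5).add d6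
      rw [dilog_reflection hy0 hy1, dilog_landen hyh hy1] at D
      have hyne : y ≠ 0 := ne_of_gt hy0
      have h1yne : (1:ℝ) - y ≠ 0 := ne_of_gt h1y0
      have hzne : (1:ℝ) - 1/y ≠ 0 := ne_of_lt hz0
      have hE : (π ^ 2 / 6 - Real.log y * Real.log (1 - y) - polylog 2 (1 - y)) / y
          + polylog 2 (1 - y) / (1 - y) * (-1)
          + (-polylog 2 (1 - y) - Real.log y ^ 2 / 2) / (1 - 1/y) * (1/y^2)
          - 3 * Real.log y ^ 2 * y⁻¹ / 6 - π ^ 2 * y⁻¹ / 6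
          + (2 * Real.log y ^ 1 * y⁻¹ * Real.log (1 - y)
            + Real.log y ^ 2 * ((1 - y)⁻¹ * (-1))) / 2 = 0 := by
        rw [show (1:ℝ) - 1/y = (y - 1)/y by field_simp]
        have hym : y - 1 ≠ 0 := sub_ne_zero.mpr (ne_of_lt hy1)
        field_simp
        ring
      rw [hE] at D
      exact D
  have hG1 : G 1 = zetaVal 3 := by
    rw [hG]
    simp only []
    rw [polylog_three_one]
    norm_num [polylog_zero_val, Real.log_one]
  rw [hG1] at key
  rw [hG] at key
  simp only [] at key
  convert key using 2
  norm_num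

theorem stmt16 : polylog 3 (1/2) = (7/8) * zetaVal 3 - (1/12) * π^2 * Real.log 2 + (1/6) * (Real.log 2)^3 := by
  have key := trilog_key
  rw [polylog_three_neg_one] at key
  rw [show (1:ℝ) - 1/2 = 1/2 by norm_num] at key
  rw [show Real.log (1/2) = -Real.log 2 by rw [one_div, Real.log_inv]] at key
  ring_nf at key ⊢
  linarith
end

section
/- For I(n) := ∫₀¹ (x^n + (1−x)^n)^{1/n} dx, the limit of I(n) as n → ∞ equals 3/4. -/
open MeasureTheory Real

noncomputable def Ifun (n : ℕ) : ℝ := ∫ x in (0:ℝ)..1, (x ^ n + (1 - x) ^ n) ^ ((1:ℝ) / n)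

lemma cont_max : Continuous (fun x : ℝ => max x (1 - x)) :=
  continuous_id.max (continuous_const.sub continuous_id)

lemma int_max : ∫ x in (0:ℝ)..1, max x (1 - x) = 3/4 := by
  have hi : ∀ a b : ℝ, IntervalIntegrable (fun x : ℝ => max x (1 - x)) volume a b :=
    fun a b => cont_max.intervalIntegrable a b
  rw [← intervalIntegral.integral_add_adjacent_intervals (a := 0) (b := 1/2) (c := 1) (hi 0 (1/2)) (hi (1/2) 1)]
  have h1 : ∫ x in (0:ℝ)..(1/2), max x (1 - x) = ∫ x in (0:ℝ)..(1/2), (1 - x) := by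
    apply intervalIntegral.integral_congr
    intro x hx
    rw [Set.uIcc_of_le (by norm_num)] at hx
    exact max_eq_right (by simp at hx; linarith [hx.1, hx.2])
  have h2 : ∫ x in (1/2:ℝ)..1, max x (1 - x) = ∫ x in (1/2:ℝ)..1, x := by
    apply intervalIntegral.integral_congr
    intro x hx
    rw [Set.uIcc_of_le (by norm_num)] at hx
    exact max_eq_left (by simp at hx; linarith [hx.1, hx.2])
  rw [h1, h2]
  have e1 : ∫ x in (0:ℝ)..(1/2), (1 - x) = 3/8 := by
    rw [intervalIntegral.integral_sub intervalIntegrable_const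
      intervalIntegral.intervalIntegrable_id]
    rw [integral_id]; norm_num
  have e2 : ∫ x in (1/2:ℝ)..1, x = 3/8 := by
    rw [integral_id]; norm_num
  rw [e1, e2]; norm_num

lemma pointwise_bounds (n : ℕ) (hn : 1 ≤ n) {x : ℝ} (hx : x ∈ Set.Icc (0:ℝ) 1) :
    max x (1 - x) ≤ (x ^ n + (1 - x) ^ n) ^ ((1:ℝ)/n) ∧
    (x ^ n + (1 - x) ^ n) ^ ((1:ℝ)/n) ≤ (2:ℝ) ^ ((1:ℝ)/n) * max x (1 - x) := by
  obtain ⟨hx0, hx1⟩ := hx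
  set M := max x (1 - x) with hM
  have hMx : x ≤ M := le_max_left _ _
  have hM1x : 1 - x ≤ M := le_max_right _ _
  have hM0 : 0 ≤ M := le_trans hx0 hMx
  have hnR : (0:ℝ) < n := by exact_mod_cast hn
  have hMn : M ^ n ≤ x ^ n + (1 - x) ^ n := by
    rcases max_cases x (1 - x) with ⟨h, _⟩ | ⟨h, _⟩ <;> rw [hM, h]
    · nlinarith [pow_nonneg (by linarith : (0:ℝ) ≤ 1 - x) n]
    · nlinarith [pow_nonneg hx0 n]
  have hsum2 : x ^ n + (1 - x) ^ n ≤ 2 * M ^ n := by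
    have h1 : x ^ n ≤ M ^ n := pow_le_pow_left₀ hx0 hMx n
    have h2 : (1 - x) ^ n ≤ M ^ n := pow_le_pow_left₀ (by linarith) hM1x n
    linarith
  have hMrpow : (M ^ n : ℝ) ^ ((1:ℝ)/n) = M := by
    rw [← Real.rpow_natCast M n, ← Real.rpow_mul hM0]
    rw [mul_one_div, div_self (ne_of_gt hnR), Real.rpow_one]
  constructor
  · calc M = (M ^ n : ℝ) ^ ((1:ℝ)/n) := hMrpow.symm
      _ ≤ _ := Real.rpow_le_rpow (pow_nonneg hM0 n) hMn (by positivity)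
  · calc (x ^ n + (1 - x) ^ n) ^ ((1:ℝ)/n)
        ≤ (2 * M ^ n) ^ ((1:ℝ)/n) := by
          apply Real.rpow_le_rpow _ hsum2 (by positivity)
          nlinarith [pow_nonneg hx0 n, pow_nonneg (by linarith : (0:ℝ) ≤ 1 - x) n]
      _ = (2:ℝ) ^ ((1:ℝ)/n) * M := by
          rw [Real.mul_rpow (by norm_num) (pow_nonneg hM0 n), hMrpow]

lemma cont_on (n : ℕ) (hn : 1 ≤ n) :
    ContinuousOn (fun x : ℝ => (x ^ n + (1 - x) ^ n) ^ ((1:ℝ)/n)) (Set.Icc 0 1) := by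
  apply ContinuousOn.rpow_const
  · exact ((continuous_pow n).comp continuous_id).continuousOn.add
      (((continuous_const.sub continuous_id).pow n)).continuousOn
  · intro x _; right; positivity

lemma Ifun_bounds (n : ℕ) (hn : 1 ≤ n) :
    3/4 ≤ Ifun n ∧ Ifun n ≤ (2:ℝ) ^ ((1:ℝ)/n) * (3/4) := by
  have hint : IntervalIntegrable (fun x : ℝ => (x ^ n + (1 - x) ^ n) ^ ((1:ℝ)/n)) volume 0 1 := by
    apply ContinuousOn.intervalIntegrable
    rw [Set.uIcc_of_le (by norm_num)]
    exact cont_on n hn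
  constructor
  · rw [← int_max]
    apply intervalIntegral.integral_mono_on (by norm_num) (cont_max.intervalIntegrable 0 1) hint
    exact fun x hx => (pointwise_bounds n hn hx).1
  · have : Ifun n ≤ ∫ x in (0:ℝ)..1, (2:ℝ) ^ ((1:ℝ)/n) * max x (1 - x) := by
      apply intervalIntegral.integral_mono_on (by norm_num) hint
        ((continuous_const.mul cont_max).intervalIntegrable 0 1)
      exact fun x hx => (pointwise_bounds n hn hx).2
    rwa [intervalIntegral.integral_const_mul, int_max] at this

theorem stmt17 : Filter.Tendsto (fun n : ℕ => Ifun n) Filter.atTop (nhds (3/4)) := by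
  have h2 : Filter.Tendsto (fun n : ℕ => (2:ℝ) ^ ((1:ℝ)/n) * (3/4)) Filter.atTop (nhds (3/4)) := by
    have ht : Filter.Tendsto (fun n : ℕ => (2:ℝ) ^ ((1:ℝ)/n)) Filter.atTop (nhds 1) := by
      have := (Filter.Tendsto.rpow (tendsto_const_nhds (x := (2:ℝ)))
        tendsto_one_div_atTop_nhds_zero_nat (Or.inl (by norm_num)))
      simpa using this
    have := ht.mul_const (3/4 : ℝ)
    simpa using this
  apply tendsto_of_tendsto_of_tendsto_of_le_of_le' tendsto_const_nhds h2
  · filter_upwards [Filter.eventually_ge_atTop 1] with n hn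
    exact (Ifun_bounds n hn).1
  · filter_upwards [Filter.eventually_ge_atTop 1] with n hn
    exact (Ifun_bounds n hn).2
end
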